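/- arXiv:1011.2032 — 3 statements merged into one kernel-verified Lean document; each statement's English description precedes it below -/
import Mathlib

section
/- For any locally integrable nonnegative functions $w_0,w_1$ on $\mathbb{R}^n$ with $0<Mw_0,Mw_1<\infty$ a.e., and any $p>1$, the pair of weights $(u,v)=((Mw_0)\, w_1^{1-p},\; w_0\,(Mw_1)^{1-p})$ satisfies the two-weight condition $A_p$: $\sup_Q \big(\tfrac{1}{|Q|}\int_Q v\big)\big(\tfrac{1}{|Q|}\int_Q u^{1-p'}\big)^{p-1} \le C$, with $C$ depending only on dimension and $p$. -/
open MeasureTheory ENNReal Set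

noncomputable section

/-- An axis-parallel cube in `ℝⁿ`. -/
def IsCube {n : ℕ} (Q : Set (Fin n → ℝ)) : Prop :=
  ∃ (a : Fin n → ℝ) (r : ℝ), 0 < r ∧ Q = Set.Icc a (fun i => a i + r)

/-- Average of `w` over a set `Q` (w.r.t. Lebesgue measure). -/
def cubeAvg {n : ℕ} (w : (Fin n → ℝ) → ℝ≥0∞) (Q : Set (Fin n → ℝ)) : ℝ≥0∞ :=
  (∫⁻ x in Q, w x) / volume Q

/-- Hardy–Littlewood maximal operator (over cubes containing the point). -/
def maxOp {n : ℕ} (f : (Fin n → ℝ) → ℝ≥0∞) (x : Fin n → ℝ) : ℝ≥0∞ :=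
  ⨆ (Q : Set (Fin n → ℝ)) (_ : IsCube Q) (_ : x ∈ Q), cubeAvg f Q

/-- `M_μ f = (M(f^{1/μ}))^μ`. -/
def maxOpP {n : ℕ} (μ : ℝ) (f : (Fin n → ℝ) → ℝ≥0∞) (x : Fin n → ℝ) : ℝ≥0∞ :=
  (maxOp (fun y => f y ^ (1 / μ)) x) ^ μ

/-- Muckenhoupt `A_p` constant; for `p = 1` the least `C` with `Mw ≤ C w` a.e. -/
def apConst {n : ℕ} (p : ℝ) (w : (Fin n → ℝ) → ℝ≥0∞) : ℝ≥0∞ :=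
  if p = 1 then
    sInf {C : ℝ≥0∞ | ∀ᵐ x ∂(volume : Measure (Fin n → ℝ)), maxOp w x ≤ C * w x}
  else
    ⨆ (Q : Set (Fin n → ℝ)) (_ : IsCube Q),
      cubeAvg w Q * (cubeAvg (fun x => w x ^ (-1 / (p - 1))) Q) ^ (p - 1)

/-- `A_∞` "constant": infimum of the `A_p` constants over `p > 1`. -/
def ainfConst {n : ℕ} (w : (Fin n → ℝ) → ℝ≥0∞) : ℝ≥0∞ :=
  ⨅ (p : ℝ) (_ : 1 < p), apConst p w

/-- `u(E) = ∫_E u`. -/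
def wMeas {n : ℕ} (w : (Fin n → ℝ) → ℝ≥0∞) (E : Set (Fin n → ℝ)) : ℝ≥0∞ :=
  ∫⁻ x in E, w x

/-- `‖g‖_{L^{p,∞}(w)} = sup_y y · w({g>y})^{1/p}`. -/
def wkNorm {n : ℕ} (p : ℝ) (w g : (Fin n → ℝ) → ℝ≥0∞) : ℝ≥0∞ :=
  ⨆ y : ℝ≥0∞, y * (wMeas w {x | y < g x}) ^ (1 / p)

/-- `‖f‖_{L^p(w)}`. -/
def stNorm {n : ℕ} (p : ℝ) (w f : (Fin n → ℝ) → ℝ≥0∞) : ℝ≥0∞ :=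
  (∫⁻ x, f x ^ p * w x) ^ (1 / p)

/-- A locally bounded function `φ : [0,∞] → [0,∞]`. -/
def LocBdd (φ : ℝ≥0∞ → ℝ≥0∞) : Prop :=
  ∀ M : ℝ≥0∞, M ≠ ⊤ → ∃ C : ℝ≥0∞, C ≠ ⊤ ∧ ∀ t ≤ M, φ t ≤ C

/-- A (a.e.) positive, locally integrable weight. -/
def PosLocInt {n : ℕ} (u : (Fin n → ℝ) → ℝ≥0∞) : Prop :=
  Measurable u ∧ (∀ᵐ x ∂(volume : Measure (Fin n → ℝ)), 0 < u x) ∧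
    ∀ Q : Set (Fin n → ℝ), IsCube Q → (∫⁻ x in Q, u x) < ⊤

end

noncomputable section

/-- Two-weight `A_p` constant of a pair `(u, v)`. -/
def twoApConst {n : ℕ} (p : ℝ) (u v : (Fin n → ℝ) → ℝ≥0∞) : ℝ≥0∞ :=
  ⨆ (Q : Set (Fin n → ℝ)) (_ : IsCube Q),
    cubeAvg v Q * (cubeAvg (fun x => u x ^ (1 - p / (p - 1))) Q) ^ (p - 1)

private lemma rpow_anti' {a b : ℝ≥0∞} {e : ℝ} (he : e ≤ 0) (hab : a ≤ b) :
    b ^ e ≤ a ^ e := by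
  rw [← neg_neg e, ENNReal.rpow_neg b, ENNReal.rpow_neg a]
  exact ENNReal.inv_le_inv.mpr (ENNReal.rpow_le_rpow hab (by linarith))

private lemma mul_rpow_of_pos_ne_top {a b : ℝ≥0∞} (ha : a ≠ 0) (ha' : a ≠ ⊤) (e : ℝ) :
    (a * b) ^ e = a ^ e * b ^ e := by
  simp [ENNReal.mul_rpow_eq_ite, ha, ha']

theorem stmt4 {n : ℕ} (p : ℝ) (hp : 1 < p) :
    ∃ C : ℝ≥0∞, C < ⊤ ∧
      ∀ w₀ w₁ : (Fin n → ℝ) → ℝ≥0∞, Measurable w₀ → Measurable w₁ →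
        (∀ Q : Set (Fin n → ℝ), IsCube Q → (∫⁻ x in Q, w₀ x) < ⊤) →
        (∀ Q : Set (Fin n → ℝ), IsCube Q → (∫⁻ x in Q, w₁ x) < ⊤) →
        (∀ᵐ x ∂(volume : Measure (Fin n → ℝ)), 0 < maxOp w₀ x ∧ maxOp w₀ x < ⊤) →
        (∀ᵐ x ∂(volume : Measure (Fin n → ℝ)), 0 < maxOp w₁ x ∧ maxOp w₁ x < ⊤) →
        twoApConst p (fun x => maxOp w₀ x * w₁ x ^ (1 - p))
          (fun x => w₀ x * maxOp w₁ x ^ (1 - p)) ≤ C := by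
  refine ⟨1, one_lt_top, ?_⟩
  intro w₀ w₁ hm₀ hm₁ _ _ hM₀ _
  have hp1 : (0:ℝ) < p - 1 := by linarith
  set e : ℝ := 1 - p / (p - 1) with he_def
  have he : e = -(1 / (p - 1)) := by
    rw [he_def]; field_simp; ring
  have he_neg : e ≤ 0 := by rw [he]; exact neg_nonpos.mpr (by positivity)
  have hee : (1 - p) * e = 1 := by rw [he]; field_simp; ring
  have hee' : e * (p - 1) = -1 := by rw [he]; field_simp
  rw [twoApConst]
  refine iSup_le fun Q => iSup_le fun hQ => ?_
  have hQmeas : MeasurableSet Q := by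
    obtain ⟨a, r, -, rfl⟩ := hQ
    exact measurableSet_Icc
  have hmax : ∀ (w : (Fin n → ℝ) → ℝ≥0∞) (x : Fin n → ℝ), x ∈ Q →
      cubeAvg w Q ≤ maxOp w x := fun w x hx =>
    le_iSup_of_le Q (le_iSup_of_le hQ (le_iSup_of_le hx le_rfl))
  set A := cubeAvg w₀ Q with hA
  set B := cubeAvg w₁ Q with hB
  -- Step 1 : average of v over Q
  have step1 : cubeAvg (fun x => w₀ x * maxOp w₁ x ^ (1 - p)) Q ≤ A * B ^ (1 - p) := by
    have h1 : (∫⁻ x in Q, w₀ x * maxOp w₁ x ^ (1 - p)) ≤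
        (∫⁻ x in Q, w₀ x) * B ^ (1 - p) := by
      rw [← lintegral_mul_const _ hm₀]
      refine lintegral_mono_ae (((ae_restrict_mem hQmeas)).mono fun x hx => ?_)
      exact mul_le_mul_right (rpow_anti' (by linarith) (hmax w₁ x hx)) _
    calc cubeAvg (fun x => w₀ x * maxOp w₁ x ^ (1 - p)) Q
        ≤ ((∫⁻ x in Q, w₀ x) * B ^ (1 - p)) / volume Q :=
          ENNReal.div_le_div_right h1 _
      _ = A * B ^ (1 - p) := by
          rw [hA, cubeAvg, div_eq_mul_inv, div_eq_mul_inv, mul_right_comm]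
  -- Step 2 : average of u^{1-p'} over Q
  have step2 : cubeAvg (fun x => (maxOp w₀ x * w₁ x ^ (1 - p)) ^ e) Q ≤ A ^ e * B := by
    have h2 : (∫⁻ x in Q, (maxOp w₀ x * w₁ x ^ (1 - p)) ^ e) ≤
        A ^ e * ∫⁻ x in Q, w₁ x := by
      rw [← lintegral_const_mul _ hm₁]
      refine lintegral_mono_ae ?_
      filter_upwards [ae_restrict_mem hQmeas, ae_restrict_of_ae hM₀] with x hx hx0
      calc (maxOp w₀ x * w₁ x ^ (1 - p)) ^ e
          = maxOp w₀ x ^ e * (w₁ x ^ (1 - p)) ^ e :=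
            mul_rpow_of_pos_ne_top hx0.1.ne' hx0.2.ne e
        _ = maxOp w₀ x ^ e * w₁ x := by
            rw [← ENNReal.rpow_mul, hee, ENNReal.rpow_one]
        _ ≤ A ^ e * w₁ x :=
            mul_le_mul_left (rpow_anti' he_neg (hmax w₀ x hx)) _
    calc cubeAvg (fun x => (maxOp w₀ x * w₁ x ^ (1 - p)) ^ e) Q
        ≤ (A ^ e * ∫⁻ x in Q, w₁ x) / volume Q := ENNReal.div_le_div_right h2 _
      _ = A ^ e * B := by rw [hB, cubeAvg, mul_div_assoc]
  -- Combine
  calc cubeAvg (fun x => w₀ x * maxOp w₁ x ^ (1 - p)) Q *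
        (cubeAvg (fun x => (maxOp w₀ x * w₁ x ^ (1 - p)) ^ e) Q) ^ (p - 1)
      ≤ (A * B ^ (1 - p)) * (A ^ e * B) ^ (p - 1) :=
        mul_le_mul' step1 (ENNReal.rpow_le_rpow step2 hp1.le)
    _ = (A * A⁻¹) * (B ^ (1 - p) * B ^ (p - 1)) := by
        rw [ENNReal.mul_rpow_of_nonneg _ _ hp1.le, ← ENNReal.rpow_mul, hee',
          ENNReal.rpow_neg_one]
        ring
    _ ≤ 1 * 1 := by
        refine mul_le_mul' (ENNReal.mul_inv_le_one A) ?_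
        have : (1 - p) = -(p - 1) := by ring
        rw [this, ENNReal.rpow_neg]
        exact ENNReal.inv_mul_le_one _
    _ = 1 := by rw [one_mul]

end
end

section
/- If the two-weight $A_p$ condition for a pair $(u,v)$ were sufficient for the strong-type bound $\int (Mf)^p v \le C\int f^p u$ (uniformly, for all pairs with $\|(u,v)\|_{A_p}=1$), then $M$ would be bounded on $L^1(\mathbb{R}^n)$; since $M$ is not bounded on $L^1$, the $A_p$ condition for two weights does not imply the strong-type bound. Concretely: there is no constant $C$ such that $\int_{\mathbb{R}^n} Mf(x)^p\,(Mf)^{1-p}(x)\,dx \le C\int_{\mathbb{R}^n} f(x)\,dx$ holds for all nonnegative $f\in L^1$, even though $((Mf)\,f^{1-p},\, f\,(Mf)^{1-p})\in A_p$ with uniformly bounded constant. -/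
open MeasureTheory ENNReal Set

noncomputable section

-- Auxiliary lemmas ------------------------------------------------------

lemma rpow_anti'_s5 {x y : ℝ≥0∞} {c : ℝ} (hc : c ≤ 0) (h : x ≤ y) : y ^ c ≤ x ^ c := by
  have h1 : ∀ z : ℝ≥0∞, z ^ c = (z ^ (-c))⁻¹ := fun z => by
    rw [← ENNReal.rpow_neg, neg_neg]
  rw [h1 x, h1 y]
  exact ENNReal.inv_le_inv.mpr (ENNReal.rpow_le_rpow h (neg_nonneg.mpr hc))

lemma rpow_ne_top' {x : ℝ≥0∞} (hx : x ≠ 0) (hx' : x ≠ ⊤) (y : ℝ) : x ^ y ≠ ⊤ := by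
  rcases le_or_gt 0 y with hy | hy
  · exact ENNReal.rpow_ne_top_of_nonneg hy hx'
  · rw [show y = -(-y) by ring, ENNReal.rpow_neg]
    exact ENNReal.inv_ne_top.mpr (ENNReal.rpow_pos (pos_iff_ne_zero.mpr hx) hx').ne'

lemma cube_meas {n : ℕ} {Q : Set (Fin n → ℝ)} (hQ : IsCube Q) : MeasurableSet Q := by
  obtain ⟨a, r, hr, rfl⟩ := hQ; exact measurableSet_Icc

lemma cube_vol_pos {n : ℕ} {Q : Set (Fin n → ℝ)} (hQ : IsCube Q) :
    0 < volume Q ∧ volume Q < ⊤ := by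
  obtain ⟨a, r, hr, rfl⟩ := hQ
  rw [Real.volume_Icc_pi]
  simp only [add_sub_cancel_left, Finset.prod_const, Finset.card_univ, Fintype.card_fin]
  exact ⟨pos_iff_ne_zero.mpr (pow_ne_zero _ (ENNReal.ofReal_pos.mpr hr).ne'),
    ENNReal.pow_lt_top ENNReal.ofReal_lt_top⟩

lemma avg_le_maxOp {n : ℕ} {f : (Fin n → ℝ) → ℝ≥0∞} {Q : Set (Fin n → ℝ)}
    (hQ : IsCube Q) {x : Fin n → ℝ} (hx : x ∈ Q) : cubeAvg f Q ≤ maxOp f x :=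
  le_iSup_of_le Q (le_iSup_of_le hQ (le_iSup_of_le hx le_rfl))

lemma part1 {n : ℕ} (p : ℝ) (hp : 1 < p) {f : (Fin n → ℝ) → ℝ≥0∞} (hf : Measurable f)
    (hloc : ∀ Q : Set (Fin n → ℝ), IsCube Q → (∫⁻ x in Q, f x) < ⊤)
    (hM : ∀ᵐ x ∂(volume : Measure (Fin n → ℝ)), 0 < maxOp f x ∧ maxOp f x < ⊤) :
    twoApConst p (fun x => maxOp f x * f x ^ (1 - p))
      (fun x => f x * maxOp f x ^ (1 - p)) ≤ 1 := by
  have hp1 : p - 1 ≠ 0 := by linarith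
  set c : ℝ := 1 - p / (p - 1) with hc_def
  have hc_eq : c = -1 / (p - 1) := by rw [hc_def, eq_div_iff hp1, sub_mul, div_mul_cancel₀ _ hp1]; ring
  have hc_neg : c ≤ 0 := by rw [hc_eq]; apply div_nonpos_of_nonpos_of_nonneg <;> linarith
  rw [twoApConst]
  apply iSup₂_le
  intro Q hQ
  obtain ⟨hv0, hvt⟩ := cube_vol_pos hQ
  set a := cubeAvg f Q with ha_def
  have hane : a ≠ ⊤ := (ENNReal.div_lt_top (hloc Q hQ).ne hv0.ne').ne
  by_cases ha0 : a = 0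
  · -- f vanishes a.e. on Q
    have hI : (∫⁻ x in Q, f x) = 0 := by
      have h := ha0
      rw [ha_def, cubeAvg, ENNReal.div_eq_zero_iff] at h
      exact h.resolve_right hvt.ne
    have hf0 := (lintegral_eq_zero_iff hf).mp hI
    have hvz : cubeAvg (fun x => f x * maxOp f x ^ (1 - p)) Q = 0 := by
      rw [cubeAvg]
      have : (∫⁻ x in Q, f x * maxOp f x ^ (1 - p)) = 0 := by
        calc (∫⁻ x in Q, f x * maxOp f x ^ (1 - p))
            = ∫⁻ _x in Q, 0 := lintegral_congr_ae (hf0.mono fun x hx => by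
              simp only [Pi.zero_apply] at hx; simp [hx])
          _ = 0 := lintegral_zero
      simp [this]
    rw [hvz, zero_mul]
    exact zero_le_one
  · have hapos : a ≠ 0 := ha0
    have hmem : ∀ᵐ x ∂(volume.restrict Q), x ∈ Q := ae_restrict_mem (cube_meas hQ)
    -- pointwise bound for v
    have hb1 : ∀ᵐ x ∂(volume.restrict Q),
        f x * maxOp f x ^ (1 - p) ≤ a ^ (1 - p) * f x := by
      filter_upwards [hmem] with x hx
      calc f x * maxOp f x ^ (1 - p)
          ≤ f x * a ^ (1 - p) :=
            mul_le_mul_right (rpow_anti'_s5 (by linarith) (avg_le_maxOp hQ hx)) _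
        _ = a ^ (1 - p) * f x := mul_comm _ _
    -- pointwise bound for σ
    have hb2 : ∀ᵐ x ∂(volume.restrict Q),
        (maxOp f x * f x ^ (1 - p)) ^ c ≤ a ^ c * f x := by
      filter_upwards [hmem] with x hx
      have h2 : (maxOp f x * f x ^ (1 - p)) ^ c ≤ (a * f x ^ (1 - p)) ^ c :=
        rpow_anti'_s5 hc_neg (mul_le_mul_left (avg_le_maxOp hQ hx) _)
      have h3 : (a * f x ^ (1 - p)) ^ c = a ^ c * (f x ^ (1 - p)) ^ c := by
        rw [ENNReal.mul_rpow_eq_ite]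
        simp [hapos, hane]
      have h4 : (f x ^ (1 - p)) ^ c = f x := by
        rw [← ENNReal.rpow_mul, show (1 - p) * c = 1 by rw [hc_eq]; field_simp; ring,
          ENNReal.rpow_one]
      calc (maxOp f x * f x ^ (1 - p)) ^ c ≤ (a * f x ^ (1 - p)) ^ c := h2
        _ = a ^ c * f x := by rw [h3, h4]
    -- integrate the bounds
    have havg : ∀ (g : (Fin n → ℝ) → ℝ≥0∞) (e : ℝ),
        (∀ᵐ x ∂(volume.restrict Q), g x ≤ a ^ e * f x) → cubeAvg g Q ≤ a ^ e * a := by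
      intro g e hg
      rw [cubeAvg]
      calc (∫⁻ x in Q, g x) / volume Q
          ≤ (∫⁻ x in Q, a ^ e * f x) / volume Q :=
            ENNReal.div_le_div_right (lintegral_mono_ae hg) _
        _ = (a ^ e * ∫⁻ x in Q, f x) / volume Q := by
            rw [lintegral_const_mul' _ _ (rpow_ne_top' hapos hane e)]
        _ = a ^ e * a := by rw [mul_div_assoc, ha_def, cubeAvg]
    have havg1 := havg _ _ hb1
    have havg2 := havg _ _ hb2
    -- combine
    have e1 : a ^ (1 - p) * a = a ^ (2 - p) := by
      nth_rewrite 2 [← ENNReal.rpow_one a]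
      rw [← ENNReal.rpow_add _ _ hapos hane, show (1-p)+1 = 2-p by ring]
    have e2 : a ^ c * a = a ^ (c + 1) := by
      nth_rewrite 2 [← ENNReal.rpow_one a]
      rw [← ENNReal.rpow_add _ _ hapos hane]
    calc cubeAvg (fun x => f x * maxOp f x ^ (1 - p)) Q *
          (cubeAvg (fun x => (maxOp f x * f x ^ (1 - p)) ^ c) Q) ^ (p - 1)
        ≤ (a ^ (1 - p) * a) * ((a ^ c * a)) ^ (p - 1) :=
          mul_le_mul' havg1 (ENNReal.rpow_le_rpow havg2 (by linarith))
      _ = a ^ (2 - p) * a ^ ((c + 1) * (p - 1)) := by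
          rw [e1, e2, ← ENNReal.rpow_mul]
      _ = a ^ ((2 - p) + (c + 1) * (p - 1)) := by
          rw [← ENNReal.rpow_add _ _ hapos hane]
      _ = 1 := by
          rw [show (2 - p) + (c + 1) * (p - 1) = 0 by rw [hc_eq]; field_simp; ring,
            ENNReal.rpow_zero]

theorem stmt5 {n : ℕ} (hn : 0 < n) (p : ℝ) (hp : 1 < p) :
    (∃ C : ℝ≥0∞, C < ⊤ ∧
      ∀ f : (Fin n → ℝ) → ℝ≥0∞, Measurable f →
        (∀ Q : Set (Fin n → ℝ), IsCube Q → (∫⁻ x in Q, f x) < ⊤) →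
        (∀ᵐ x ∂(volume : Measure (Fin n → ℝ)), 0 < maxOp f x ∧ maxOp f x < ⊤) →
        twoApConst p (fun x => maxOp f x * f x ^ (1 - p))
          (fun x => f x * maxOp f x ^ (1 - p)) ≤ C) ∧
    ¬ ∃ C : ℝ≥0∞, C < ⊤ ∧
        ∀ f : (Fin n → ℝ) → ℝ≥0∞, Measurable f → (∫⁻ x, f x) < ⊤ →
          (∫⁻ x, maxOp f x ^ p * maxOp f x ^ (1 - p)) ≤ C * ∫⁻ x, f x := by
  refine ⟨⟨1, ENNReal.one_lt_top, fun f hf hloc hM => part1 p hp hf hloc hM⟩, ?_⟩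
  rintro ⟨C, hC, hbound⟩
  set g : (Fin n → ℝ) → ℝ≥0∞ := (Set.Icc (0 : Fin n → ℝ) 1).indicator (fun _ => 1) with hg_def
  have hgmeas : Measurable g := measurable_const.indicator measurableSet_Icc
  have hunit : volume (Set.Icc (0 : Fin n → ℝ) 1) = 1 := by
    rw [Real.volume_Icc_pi]; simp
  have hint : (∫⁻ x, g x) = 1 := by
    rw [hg_def, lintegral_indicator measurableSet_Icc, setLIntegral_one, hunit]
  -- the maximal function of `g` is everywhere at most 1
  have hle1 : ∀ x, maxOp g x ≤ 1 := by
    intro x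
    refine iSup_le fun Q => iSup_le fun hQ => iSup_le fun _ => ?_
    rw [cubeAvg]
    refine ENNReal.div_le_of_le_mul ?_
    rw [one_mul, ← setLIntegral_one Q]
    exact lintegral_mono fun y =>
      Set.indicator_le' (fun _ _ => le_rfl) (fun _ _ => zero_le_one) y
  -- the nested cubes
  set Qk : ℕ → Set (Fin n → ℝ) := fun k => Set.Icc (fun _ => (0:ℝ)) (fun _ => (2:ℝ)^k)
    with hQk_def
  have hQkcube : ∀ k, IsCube (Qk k) := fun k =>
    ⟨fun _ => 0, 2^k, by positivity, by simp [hQk_def]⟩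
  have hVpos : ∀ k, volume (Qk k) ≠ 0 ∧ volume (Qk k) ≠ ⊤ := fun k =>
    ⟨(cube_vol_pos (hQkcube k)).1.ne', (cube_vol_pos (hQkcube k)).2.ne⟩
  have hVk : ∀ k, volume (Qk k) = ENNReal.ofReal ((2:ℝ)^k) ^ n := by
    intro k
    rw [hQk_def]
    rw [Real.volume_Icc_pi]
    simp [Finset.prod_const]
  have hVmul : ∀ k, 2 * volume (Qk k) ≤ volume (Qk (k+1)) := by
    intro k
    rw [hVk, hVk]
    have h2 : ENNReal.ofReal ((2:ℝ)^(k+1)) = 2 * ENNReal.ofReal ((2:ℝ)^k) := by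
      rw [pow_succ, ENNReal.ofReal_mul (by positivity)]
      norm_num [mul_comm]
    rw [h2, mul_pow]
    exact mul_le_mul_left (le_self_pow₀ one_le_two hn.ne') _
  have hQmono : Monotone Qk := monotone_nat_of_le_succ fun k =>
    Set.Icc_subset_Icc le_rfl (fun i => by
      simpa using pow_le_pow_right₀ one_le_two (Nat.le_succ k))
  have hsubset : ∀ k, Set.Icc (0 : Fin n → ℝ) 1 ⊆ Qk k := fun k =>
    Set.Icc_subset_Icc (fun i => le_rfl) (fun i => by
      simpa using pow_le_pow_right₀ one_le_two (Nat.zero_le k))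
  -- lower bound for the maximal function on `Qk (k+1)`
  have hlow : ∀ k, ∀ x ∈ Qk (k+1), (volume (Qk (k+1)))⁻¹ ≤ maxOp g x := by
    intro k x hx
    have hcav : cubeAvg g (Qk (k+1)) = (volume (Qk (k+1)))⁻¹ := by
      rw [cubeAvg, hg_def, setLIntegral_indicator measurableSet_Icc, setLIntegral_one,
        Set.inter_eq_self_of_subset_left (hsubset (k+1)), hunit, one_div]
    rw [← hcav]
    exact avg_le_maxOp (hQkcube (k+1)) hx
  -- the dyadic shells
  set S : ℕ → Set (Fin n → ℝ) := fun k => Qk (k+1) \ Qk k with hS_def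
  have hSmeas : ∀ k, MeasurableSet (S k) := fun k =>
    (cube_meas (hQkcube (k+1))).diff (cube_meas (hQkcube k))
  have hSdisj : Pairwise (Function.onFun Disjoint S) := by
    intro i j hij
    rcases hij.lt_or_gt with h | h
    · exact Set.disjoint_left.mpr fun x hxi hxj => hxj.2 (hQmono (Nat.succ_le_of_lt h) hxi.1)
    · exact Set.disjoint_right.mpr fun x hxj hxi => hxi.2 (hQmono (Nat.succ_le_of_lt h) hxj.1)
  -- each shell contributes at least 1/2
  have hSk_lb : ∀ k, 2⁻¹ ≤ ∫⁻ x in S k, maxOp g x ^ p * maxOp g x ^ (1-p) := by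
    intro k
    set V := volume (Qk (k+1)) with hV_def
    have hV0 := (hVpos (k+1)).1
    have hVt := (hVpos (k+1)).2
    have hpt : ∀ x ∈ S k, V⁻¹ ≤ maxOp g x ^ p * maxOp g x ^ (1-p) := by
      intro x hx
      have h1 : V⁻¹ ≤ maxOp g x := hlow k x hx.1
      have hne0 : maxOp g x ≠ 0 := by
        intro h
        rw [h, le_zero_iff] at h1
        exact hVt (ENNReal.inv_eq_zero.mp h1)
      have hnetop : maxOp g x ≠ ⊤ := (lt_of_le_of_lt (hle1 x) ENNReal.one_lt_top).ne
      have heq : maxOp g x ^ p * maxOp g x ^ (1-p) = maxOp g x := by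
        rw [← ENNReal.rpow_add _ _ hne0 hnetop, show p + (1-p) = 1 by ring, ENNReal.rpow_one]
      rw [heq]; exact h1
    have hvol : volume (S k) = V - volume (Qk k) := by
      rw [hS_def]
      exact measure_diff (hQmono (Nat.le_succ k)) (cube_meas (hQkcube k)).nullMeasurableSet
        (hVpos k).2
    have hhalf : volume (Qk k) ≤ V / 2 := by
      rw [ENNReal.le_div_iff_mul_le (Or.inl two_ne_zero) (Or.inl ENNReal.ofNat_ne_top), mul_comm]
      exact hVmul k
    have hShalf : V / 2 ≤ volume (S k) := by
      rw [hvol]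
      calc V / 2 = V - V / 2 := (ENNReal.sub_half hVt).symm
        _ ≤ V - volume (Qk k) := tsub_le_tsub_left hhalf V
    calc (2:ℝ≥0∞)⁻¹ = V⁻¹ * (V / 2) := by
          rw [div_eq_mul_inv, ← mul_assoc, ENNReal.inv_mul_cancel hV0 hVt, one_mul]
      _ ≤ V⁻¹ * volume (S k) := mul_le_mul_right hShalf _
      _ = ∫⁻ _x in S k, V⁻¹ := by rw [setLIntegral_const]
      _ ≤ ∫⁻ x in S k, maxOp g x ^ p * maxOp g x ^ (1-p) := by
          refine lintegral_mono_ae ?_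
          filter_upwards [ae_restrict_mem (hSmeas k)] with x hx using hpt x hx
  -- hence the full integral is infinite
  have htot : (∫⁻ x, maxOp g x ^ p * maxOp g x ^ (1-p)) = ⊤ := by
    refine top_unique ?_
    calc (⊤:ℝ≥0∞) = ∑' _k : ℕ, 2⁻¹ :=
          (ENNReal.tsum_const_eq_top_of_ne_zero (by norm_num)).symm
      _ ≤ ∑' k, ∫⁻ x in S k, maxOp g x ^ p * maxOp g x ^ (1-p) :=
          ENNReal.tsum_le_tsum hSk_lb
      _ = ∫⁻ x in ⋃ k, S k, maxOp g x ^ p * maxOp g x ^ (1-p) :=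
          (lintegral_iUnion hSmeas hSdisj _).symm
      _ ≤ ∫⁻ x, maxOp g x ^ p * maxOp g x ^ (1-p) := setLIntegral_le_lintegral _ _
  have hfin := hbound g hgmeas (by rw [hint]; exact ENNReal.one_lt_top)
  rw [htot, hint, mul_one] at hfin
  exact absurd (lt_of_le_of_lt hfin hC) (lt_irrefl _)

end
end

section
/- Let $f,g\ge0$ satisfy the two-weight weak-type hypothesis: $\|g\|_{L^{p_0,\infty}(u_2)}\le\|f\|_{L^{p_0}(u_1)}$ for every pair $(u_1,u_2)$ with $\|(u_1,u_2)\|_{A_{p_0}}=1$, for some $1\le p_0<\infty$. Let $1<p,q<\infty$ and let $(u,v)$ be a pair of weights such that $M:L^p(u)\to L^{q,\infty}(v)$ is bounded (i.e. $(u,v)\in A_{p,q}$) and $M:L^{q'}(v^{1-q'})\to L^{p'}(u^{1-p'})$ is bounded (i.e. $(v^{1-q'},u^{1-p'})\in S_{q',p'}$). Then $\|g\|_{L^{q,\infty}(v)}\le C\|f\|_{L^p(u)}$. -/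
open MeasureTheory ENNReal Set

noncomputable section

/-- Two-weight `A_p` constant of a pair `(u₁, u₂)`; for `p = 1` the least `C`
with `Mu₂ ≤ C u₁` a.e. -/
def twoApC {n : ℕ} (p : ℝ) (u₁ u₂ : (Fin n → ℝ) → ℝ≥0∞) : ℝ≥0∞ :=
  if p = 1 then
    sInf {C : ℝ≥0∞ | ∀ᵐ x ∂(volume : Measure (Fin n → ℝ)), maxOp u₂ x ≤ C * u₁ x}
  else
    ⨆ (Q : Set (Fin n → ℝ)) (_ : IsCube Q),
      cubeAvg u₂ Q * (cubeAvg (fun x => u₁ x ^ (1 - p / (p - 1))) Q) ^ (p - 1)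

namespace StmtAux
open Filter
variable {n : ℕ}

variable {n : ℕ}

lemma volume_icc (a : Fin n → ℝ) {r : ℝ} (hr : 0 < r) :
    volume (Icc a (fun i => a i + r)) = (ENNReal.ofReal r) ^ n := by
  rw [Real.volume_Icc_pi]
  simp

lemma isCube_volume {Q : Set (Fin n → ℝ)} (h : IsCube Q) :
    volume Q ≠ 0 ∧ volume Q ≠ ⊤ := by
  obtain ⟨a, r, hr, rfl⟩ := h
  rw [volume_icc a hr]
  constructor
  · simp [pow_eq_zero_iff', ENNReal.ofReal_eq_zero, not_le, hr]
  · exact ENNReal.pow_ne_top ENNReal.ofReal_ne_top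

lemma cubeAvg_le_maxOp (w : (Fin n → ℝ) → ℝ≥0∞) {Q : Set (Fin n → ℝ)} {x : Fin n → ℝ}
    (hQ : IsCube Q) (hx : x ∈ Q) : cubeAvg w Q ≤ maxOp w x := by
  unfold maxOp
  exact le_iSup_of_le Q (le_iSup_of_le hQ (le_iSup_of_le hx le_rfl))


def ratCube (n : ℕ) (j : (Fin n → ℚ) × ℚ) : Set (Fin n → ℝ) :=
  Icc (fun i => (j.1 i : ℝ)) (fun i => (j.1 i : ℝ) + (j.2 : ℝ))

open Classical in
def MQ (w : (Fin n → ℝ) → ℝ≥0∞) (x : Fin n → ℝ) : ℝ≥0∞ :=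
  ⨆ j : (Fin n → ℚ) × ℚ,
    if 0 < j.2 ∧ x ∈ ratCube n j then cubeAvg w (ratCube n j) else 0

open Classical in
lemma measurable_MQ (w : (Fin n → ℝ) → ℝ≥0∞) : Measurable (MQ w) := by
  apply Measurable.iSup
  intro j
  by_cases hj : 0 < j.2
  · have : (fun x => if 0 < j.2 ∧ x ∈ ratCube n j then cubeAvg w (ratCube n j) else 0)
        = (ratCube n j).indicator (fun _ => cubeAvg w (ratCube n j)) := by
      funext x
      by_cases hx : x ∈ ratCube n j
      · simp [hj, hx]
      · simp [hj, hx]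
    rw [this]
    exact (measurable_const).indicator measurableSet_Icc
  · have : (fun x => if 0 < j.2 ∧ x ∈ ratCube n j then cubeAvg w (ratCube n j) else 0)
        = fun _ => 0 := by
      funext x; simp [hj]
    rw [this]; exact measurable_const

open Classical in
lemma MQ_le_maxOp (w : (Fin n → ℝ) → ℝ≥0∞) (x : Fin n → ℝ) : MQ w x ≤ maxOp w x := by
  refine iSup_le fun j => ?_
  by_cases h : 0 < j.2 ∧ x ∈ ratCube n j
  · rw [if_pos h]
    refine cubeAvg_le_maxOp w ⟨_, _, ?_, rfl⟩ h.2
    exact_mod_cast h.1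
  · rw [if_neg h]; exact zero_le

open Classical in
lemma maxOp_le_MQ (w : (Fin n → ℝ) → ℝ≥0∞) (x : Fin n → ℝ) : maxOp w x ≤ MQ w x := by
  refine iSup_le fun Q => iSup_le fun hQ => iSup_le fun hx => ?_
  obtain ⟨a, r, hr, rfl⟩ := hQ
  set T := ∫⁻ y in Icc a (fun i => a i + r), w y with hT
  have claim : ∀ s : ℝ, r < s → T / (ENNReal.ofReal s) ^ n ≤ MQ w x := by
    intro s hs
    have h2 : 0 < (s - r) / 2 := by linarith
    choose q hq1 hq2 using fun i => exists_rat_btwn (show a i - (s - r) / 2 < a i by linarith)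
    obtain ⟨ρ, hρ1, hρ2⟩ := exists_rat_btwn (show r + (s - r) / 2 < s by linarith)
    have hρpos : (0 : ℝ) < (ρ : ℝ) := by linarith
    have hsub : Icc a (fun i => a i + r) ⊆ ratCube n (q, ρ) := by
      apply Icc_subset_Icc
      · intro i; exact (hq2 i).le
      · intro i
        show a i + r ≤ (q i : ℝ) + (ρ : ℝ)
        have := hq1 i
        linarith
    have hxj : x ∈ ratCube n (q, ρ) := hsub hx
    have hvol : volume (ratCube n (q, ρ)) = (ENNReal.ofReal (ρ : ℝ)) ^ n := by
      have := volume_icc (n := n) (fun i => (q i : ℝ)) hρpos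
      exact this
    have h1 : T / (ENNReal.ofReal s) ^ n ≤ cubeAvg w (ratCube n (q, ρ)) := by
      unfold cubeAvg
      rw [hvol]
      refine ENNReal.div_le_div ?_ ?_
      · exact lintegral_mono' (Measure.restrict_mono hsub le_rfl) le_rfl
      · exact pow_le_pow_left' (ENNReal.ofReal_le_ofReal hρ2.le) n
    refine h1.trans ?_
    refine le_trans ?_ (le_iSup _ (q, ρ))
    rw [if_pos ⟨by exact_mod_cast hρpos, hxj⟩]
  by_cases hX : MQ w x = ⊤
  · rw [hX]; exact le_top
  have hmul : T ≤ MQ w x * (ENNReal.ofReal r) ^ n := by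
    have tend : Tendsto (fun k : ℕ => MQ w x * (ENNReal.ofReal (r + 1 / (k + 1))) ^ n)
        atTop (nhds (MQ w x * (ENNReal.ofReal r) ^ n)) := by
      refine ENNReal.Tendsto.const_mul ?_ (Or.inr hX)
      refine ENNReal.Tendsto.pow ?_
      refine (ENNReal.continuous_ofReal.tendsto r).comp ?_
      have : Tendsto (fun k : ℕ => 1 / ((k : ℝ) + 1)) atTop (nhds 0) :=
        tendsto_one_div_add_atTop_nhds_zero_nat
      simpa using tendsto_const_nhds.add this
    refine ge_of_tendsto' tend fun k => ?_
    have hk : r < r + 1 / ((k : ℝ) + 1) := by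
      have : (0:ℝ) < 1 / ((k : ℝ) + 1) := by positivity
      linarith
    have := claim _ hk
    calc T = T / (ENNReal.ofReal (r + 1 / ((k:ℝ) + 1))) ^ n
        * (ENNReal.ofReal (r + 1 / ((k:ℝ) + 1))) ^ n := by
          rw [ENNReal.div_mul_cancel]
          · exact pow_ne_zero n (ENNReal.ofReal_pos.mpr (by positivity)).ne'
          · exact ENNReal.pow_ne_top ENNReal.ofReal_ne_top
      _ ≤ MQ w x * (ENNReal.ofReal (r + 1 / ((k:ℝ) + 1))) ^ n :=
          mul_le_mul_left this _
  have : cubeAvg w (Icc a (fun i => a i + r)) = T / (ENNReal.ofReal r) ^ n := by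
    unfold cubeAvg; rw [volume_icc a hr]
  rw [this]
  exact ENNReal.div_le_of_le_mul hmul

lemma maxOp_eq_MQ (w : (Fin n → ℝ) → ℝ≥0∞) : maxOp w = MQ w :=
  funext fun x => le_antisymm (maxOp_le_MQ w x) (MQ_le_maxOp w x)

lemma measurable_maxOp (w : (Fin n → ℝ) → ℝ≥0∞) : Measurable (maxOp w) := by
  rw [maxOp_eq_MQ]; exact measurable_MQ w


lemma cubeAvg_le_const {w : (Fin n → ℝ) → ℝ≥0∞} {N : ℝ≥0∞} (hw : ∀ x, w x ≤ N)
    {Q : Set (Fin n → ℝ)} (hQ : IsCube Q) : cubeAvg w Q ≤ N := by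
  unfold cubeAvg
  refine ENNReal.div_le_of_le_mul ?_
  calc ∫⁻ x in Q, w x ≤ ∫⁻ _ in Q, N := setLIntegral_mono measurable_const fun x _ => hw x
    _ = N * volume Q := by rw [setLIntegral_const]

lemma maxOp_le_const {w : (Fin n → ℝ) → ℝ≥0∞} {N : ℝ≥0∞} (hw : ∀ x, w x ≤ N)
    (x : Fin n → ℝ) : maxOp w x ≤ N := by
  refine iSup_le fun Q => iSup_le fun hQ => iSup_le fun _ => cubeAvg_le_const hw hQ


lemma maxOp_pos {w : (Fin n → ℝ) → ℝ≥0∞}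
    (hw0 : ∫⁻ x, w x ≠ 0) (x : Fin n → ℝ) : 0 < maxOp w x := by
  have key : ∃ k : ℕ, ∫⁻ y in Icc (fun i => x i - ((k:ℝ)+1)) (fun i => (x i - ((k:ℝ)+1)) + (2*((k:ℝ)+1))), w y ≠ 0 := by
    by_contra hcon
    push_neg at hcon
    apply hw0
    set s : ℕ → Set (Fin n → ℝ) := fun k => Icc (fun i => x i - ((k:ℝ)+1)) (fun i => (x i - ((k:ℝ)+1)) + (2*((k:ℝ)+1))) with hs
    have hunion : (⋃ k : ℕ, s k) = univ := by
      ext z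
      simp only [mem_iUnion, mem_univ, iff_true]
      obtain ⟨k, hk⟩ := exists_nat_ge (∑ i : Fin n, |z i - x i|)
      refine ⟨k, fun i => ?_, fun i => ?_⟩ <;>
      · have h1 : |z i - x i| ≤ (k:ℝ) := by
          refine le_trans ?_ hk
          exact Finset.single_le_sum (f := fun i => |z i - x i|) (fun j _ => abs_nonneg _) (Finset.mem_univ i)
        have h2 := abs_le.mp h1
        simp only
        first
          | linarith [h2.1, h2.2]
          | linarith [h2.1, h2.2]
    have hle := lintegral_iUnion_le (μ := volume) (fun k : ℕ => s k) w
    rw [hunion] at hle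
    simp only [Measure.restrict_univ] at hle
    refine le_antisymm (le_trans hle ?_) (zero_le)
    simp [hs, hcon]
  obtain ⟨k, hk⟩ := key
  have hcube : IsCube (Icc (fun i => x i - ((k:ℝ)+1)) (fun i => (x i - ((k:ℝ)+1)) + (2*((k:ℝ)+1))) : Set (Fin n → ℝ)) :=
    ⟨fun i => x i - ((k:ℝ)+1), 2*((k:ℝ)+1), by positivity, rfl⟩
  have hx : x ∈ (Icc (fun i => x i - ((k:ℝ)+1)) (fun i => (x i - ((k:ℝ)+1)) + (2*((k:ℝ)+1))) : Set (Fin n → ℝ)) := by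
    constructor <;> intro i <;> simp only <;>
      [skip; skip] <;> nlinarith [Nat.cast_nonneg (α := ℝ) k]
  refine lt_of_lt_of_le ?_ (cubeAvg_le_maxOp w hcube hx)
  unfold cubeAvg
  exact ENNReal.div_pos hk (isCube_volume hcube).2


lemma volume_univ_ne_zero : (volume : Measure (Fin n → ℝ)) univ ≠ 0 := by
  have hc : IsCube (Icc (0 : Fin n → ℝ) (fun i => (0 : Fin n → ℝ) i + 1)) := ⟨0, 1, one_pos, rfl⟩
  have := (isCube_volume hc).1
  intro h
  exact this (le_antisymm (le_trans (measure_mono (subset_univ _)) h.le) (zero_le))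

lemma volume_ne_zero : (volume : Measure (Fin n → ℝ)) ≠ 0 := by
  intro h
  exact volume_univ_ne_zero (n := n) (by rw [h]; rfl)

lemma ae_exists {P : (Fin n → ℝ) → Prop} (h : ∀ᵐ x ∂(volume : Measure (Fin n → ℝ)), P x) :
    ∃ x, P x := by
  have : (MeasureTheory.ae (volume : Measure (Fin n → ℝ))).NeBot := ae_neBot.mpr volume_ne_zero
  exact h.exists

lemma cubeAvg_const (c : ℝ≥0∞) {Q : Set (Fin n → ℝ)} (hQ : IsCube Q) :
    cubeAvg (fun _ => c) Q = c := by
  unfold cubeAvg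
  rw [setLIntegral_const, div_eq_mul_inv, mul_assoc, ← div_eq_mul_inv,
    ENNReal.div_self (isCube_volume hQ).1 (isCube_volume hQ).2, mul_one]

lemma maxOp_one (x : Fin n → ℝ) : maxOp (fun _ => (1:ℝ≥0∞)) x = 1 := by
  apply le_antisymm
  · exact maxOp_le_const (fun _ => le_rfl) x
  · have hc : IsCube (Icc (fun i => x i) (fun i => x i + 1)) := ⟨x, 1, one_pos, rfl⟩
    have hx : x ∈ Icc (fun i => x i) (fun i => x i + 1) :=
      ⟨fun i => le_rfl, fun i => by simp only; linarith⟩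
    have := cubeAvg_le_maxOp (fun _ => (1:ℝ≥0∞)) hc hx
    rwa [cubeAvg_const 1 hc] at this

lemma mul_rpow_pos {c : ℝ≥0∞} (hc0 : c ≠ 0) (hct : c ≠ ⊤) (a : ℝ≥0∞) (β : ℝ) :
    (c * a) ^ β = c ^ β * a ^ β := by
  by_cases ha : a = 0
  · subst ha
    rcases lt_trichotomy β 0 with hβ | hβ | hβ
    · rw [mul_zero, ENNReal.zero_rpow_of_neg hβ, ENNReal.mul_top]
      intro h
      exact (ENNReal.rpow_eq_zero_iff.mp h).elim (fun h => hc0 h.1) (fun h => hct h.1)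
    · subst hβ; simp
    · rw [mul_zero, ENNReal.zero_rpow_of_pos hβ, mul_zero]
  · exact ENNReal.mul_rpow_of_ne_zero hc0 ha β

lemma rpow_pos_finite {x : ℝ≥0∞} (h0 : x ≠ 0) (ht : x ≠ ⊤) (β : ℝ) :
    x ^ β ≠ 0 ∧ x ^ β ≠ ⊤ := by
  constructor
  · intro h
    exact (ENNReal.rpow_eq_zero_iff.mp h).elim (fun h => h0 h.1) (fun h => ht h.1)
  · intro h
    exact (ENNReal.rpow_eq_top_iff.mp h).elim (fun h => h0 h.1) (fun h => ht h.1)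

lemma rpow_anti {x z : ℝ≥0∞} (hxz : x ≤ z) {β : ℝ} (hβ : β ≤ 0) : z ^ β ≤ x ^ β := by
  have h1 : x ^ (-β) ≤ z ^ (-β) := ENNReal.rpow_le_rpow hxz (by linarith)
  rw [← neg_neg β, ENNReal.rpow_neg z (-β), ENNReal.rpow_neg x (-β)]
  exact ENNReal.inv_le_inv.mpr h1


lemma exists_mem_ne_zero {w : (Fin n → ℝ) → ℝ≥0∞} {Q : Set (Fin n → ℝ)}
    (h : ∫⁻ x in Q, w x ≠ 0) : ∃ z ∈ Q, w z ≠ 0 := by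
  by_contra hcon
  push_neg at hcon
  apply h
  refine le_antisymm ?_ (zero_le)
  calc ∫⁻ x in Q, w x ≤ ∫⁻ _ in Q, 0 := setLIntegral_mono measurable_const fun x hx => le_of_eq (hcon x hx)
    _ = 0 := lintegral_zero

lemma cubeAvg_mono_on {a b : (Fin n → ℝ) → ℝ≥0∞} {Q : Set (Fin n → ℝ)}
    (hb : Measurable b) (h : ∀ x ∈ Q, a x ≤ b x) : cubeAvg a Q ≤ cubeAvg b Q :=
  ENNReal.div_le_div (setLIntegral_mono hb h) le_rfl

lemma cubeAvg_const_mul {c : ℝ≥0∞} (hct : c ≠ ⊤) (h : (Fin n → ℝ) → ℝ≥0∞)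
    (Q : Set (Fin n → ℝ)) : cubeAvg (fun x => c * h x) Q = c * cubeAvg h Q := by
  unfold cubeAvg
  rw [lintegral_const_mul' c _ hct, div_eq_mul_inv, div_eq_mul_inv, mul_assoc]

lemma pair_upper {p₀ : ℝ} (hp : 1 < p₀) {f w : (Fin n → ℝ) → ℝ≥0∞} {y N : ℝ≥0∞}
    (hf : Measurable f) (hy0 : y ≠ 0) (hyt : y ≠ ⊤) (hNt : N ≠ ⊤)
    (hwN : ∀ x, w x ≤ N) (hw0 : ∫⁻ x, w x ≠ 0)
    (hsupp : ∀ x, w x ≠ 0 → maxOp f x ≤ y) :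
    twoApC p₀ (fun x => maxOp w x * (max (f x / y) 1) ^ (1 - p₀)) w ≤ (2:ℝ≥0∞) ^ (p₀ - 1) := by
  have hp1 : p₀ ≠ 1 := hp.ne'
  have hps : (0:ℝ) < p₀ - 1 := by linarith
  unfold twoApC
  rw [if_neg hp1]
  set β := 1 - p₀ / (p₀ - 1) with hβdef
  have hβ : β = -(1 / (p₀ - 1)) := by
    rw [hβdef]; field_simp; ring
  have hβneg : β < 0 := by
    rw [hβ]; simp only [neg_neg, neg_lt, neg_zero]; positivity
  have hmul1 : (1 - p₀) * β = 1 := by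
    rw [hβ]; field_simp; ring
  have hmulm1 : β * (p₀ - 1) = -1 := by
    rw [hβ]; field_simp
  have hMw_pos : ∀ x, 0 < maxOp w x := maxOp_pos hw0
  have hMw_le : ∀ x : Fin n → ℝ, maxOp w x ≤ N := maxOp_le_const hwN
  refine iSup_le fun Q => iSup_le fun hQ => ?_
  by_cases hQ0 : ∫⁻ x in Q, w x = 0
  · have hz : cubeAvg w Q = 0 := by unfold cubeAvg; rw [hQ0, ENNReal.zero_div]
    rw [hz, zero_mul]
    exact zero_le
  · obtain ⟨z, hzQ, hz⟩ := exists_mem_ne_zero hQ0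
    have havgf : cubeAvg f Q ≤ y := le_trans (cubeAvg_le_maxOp f hQ hzQ) (hsupp z hz)
    have havgw0 : cubeAvg w Q ≠ 0 := (ENNReal.div_pos hQ0 (isCube_volume hQ).2).ne'
    have havgwt : cubeAvg w Q ≠ ⊤ :=
      (lt_of_le_of_lt (cubeAvg_le_const hwN hQ) hNt.lt_top).ne
    have key : ∀ x ∈ Q, (maxOp w x * (max (f x / y) 1) ^ (1 - p₀)) ^ β
        ≤ (cubeAvg w Q) ^ β * (f x / y + 1) := by
      intro x hx
      have h1 : (maxOp w x * (max (f x / y) 1) ^ (1 - p₀)) ^ β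
          = (maxOp w x) ^ β * ((max (f x / y) 1) ^ (1 - p₀)) ^ β :=
        mul_rpow_pos (hMw_pos x).ne' (lt_of_le_of_lt (hMw_le x) hNt.lt_top).ne _ β
      rw [h1, ← ENNReal.rpow_mul, hmul1, ENNReal.rpow_one]
      exact mul_le_mul' (rpow_anti (cubeAvg_le_maxOp w hQ hx) hβneg.le)
        (max_le le_self_add (le_add_self))
    have havg2 : cubeAvg (fun x => (maxOp w x * (max (f x / y) 1) ^ (1 - p₀)) ^ β) Q
        ≤ (cubeAvg w Q) ^ β * 2 := by
      have hmeas2 : Measurable fun x => (cubeAvg w Q) ^ β * (f x / y + 1) := by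
        apply Measurable.const_mul
        exact (hf.div_const y).add measurable_const
      have step1 := cubeAvg_mono_on (Q := Q) hmeas2 key
      have step2 : cubeAvg (fun x => (cubeAvg w Q) ^ β * (f x / y + 1)) Q
          = (cubeAvg w Q) ^ β * cubeAvg (fun x => f x / y + 1) Q :=
        cubeAvg_const_mul (rpow_pos_finite havgw0 havgwt β).2 _ Q
      have step3 : cubeAvg (fun x => f x / y + 1) Q ≤ 2 := by
        unfold cubeAvg
        rw [lintegral_add_right _ measurable_const, setLIntegral_one, ENNReal.add_div]
        have hA : (∫⁻ x in Q, f x / y) / volume Q ≤ 1 := by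
          have h3 : ∫⁻ x in Q, f x / y = (∫⁻ x in Q, f x) * y⁻¹ := by
            simp_rw [div_eq_mul_inv]
            exact lintegral_mul_const' y⁻¹ _ (ENNReal.inv_ne_top.mpr hy0)
          rw [h3, div_eq_mul_inv, mul_right_comm, ← div_eq_mul_inv]
          calc (∫⁻ x in Q, f x) / volume Q * y⁻¹ ≤ y * y⁻¹ := by
                exact mul_le_mul_left havgf _
            _ = 1 := ENNReal.mul_inv_cancel hy0 hyt
        have hB : volume Q / volume Q = 1 :=
          ENNReal.div_self (isCube_volume hQ).1 (isCube_volume hQ).2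
        rw [hB]
        calc (∫⁻ x in Q, f x / y) / volume Q + 1 ≤ 1 + 1 := add_le_add hA le_rfl
          _ = 2 := one_add_one_eq_two
      calc cubeAvg (fun x => (maxOp w x * (max (f x / y) 1) ^ (1 - p₀)) ^ β) Q
          ≤ (cubeAvg w Q) ^ β * cubeAvg (fun x => f x / y + 1) Q := step2 ▸ step1
        _ ≤ (cubeAvg w Q) ^ β * 2 := mul_le_mul_right step3 _
    calc cubeAvg w Q * (cubeAvg (fun x => (maxOp w x * (max (f x / y) 1) ^ (1 - p₀)) ^ β) Q) ^ (p₀ - 1)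
        ≤ cubeAvg w Q * ((cubeAvg w Q) ^ β * 2) ^ (p₀ - 1) :=
          mul_le_mul_right (ENNReal.rpow_le_rpow havg2 hps.le) _
      _ = cubeAvg w Q * ((cubeAvg w Q) ^ (β * (p₀ - 1)) * 2 ^ (p₀ - 1)) := by
          rw [ENNReal.mul_rpow_of_nonneg _ _ hps.le, ENNReal.rpow_mul]
      _ = (cubeAvg w Q * (cubeAvg w Q)⁻¹) * 2 ^ (p₀ - 1) := by
          rw [hmulm1, ENNReal.rpow_neg_one, mul_assoc]
      _ = 1 * 2 ^ (p₀ - 1) := by rw [ENNReal.mul_inv_cancel havgw0 havgwt]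
      _ = 2 ^ (p₀ - 1) := one_mul _


lemma exists_cube_mem_ne_zero {w : (Fin n → ℝ) → ℝ≥0∞} (hw0 : ∫⁻ x, w x ≠ 0)
    (x : Fin n → ℝ) :
    ∃ Q : Set (Fin n → ℝ), IsCube Q ∧ x ∈ Q ∧ (∫⁻ z in Q, w z) ≠ 0 := by
  have key : ∃ k : ℕ, ∫⁻ z in Icc (fun i => x i - ((k:ℝ)+1)) (fun i => (x i - ((k:ℝ)+1)) + (2*((k:ℝ)+1))), w z ≠ 0 := by
    by_contra hcon
    push_neg at hcon
    apply hw0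
    set s : ℕ → Set (Fin n → ℝ) := fun k => Icc (fun i => x i - ((k:ℝ)+1)) (fun i => (x i - ((k:ℝ)+1)) + (2*((k:ℝ)+1))) with hs
    have hunion : (⋃ k : ℕ, s k) = univ := by
      ext z
      simp only [mem_iUnion, mem_univ, iff_true]
      obtain ⟨k, hk⟩ := exists_nat_ge (∑ i : Fin n, |z i - x i|)
      refine ⟨k, fun i => ?_, fun i => ?_⟩ <;>
      · have h1 : |z i - x i| ≤ (k:ℝ) := by
          refine le_trans ?_ hk
          exact Finset.single_le_sum (f := fun i => |z i - x i|) (fun j _ => abs_nonneg _) (Finset.mem_univ i)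
        have h2 := abs_le.mp h1
        simp only
        linarith [h2.1, h2.2]
    have hle := lintegral_iUnion_le (μ := volume) (fun k : ℕ => s k) w
    rw [hunion] at hle
    simp only [Measure.restrict_univ] at hle
    refine le_antisymm (le_trans hle ?_) (zero_le)
    simp [hs, hcon]
  obtain ⟨k, hk⟩ := key
  refine ⟨_, ⟨fun i => x i - ((k:ℝ)+1), 2*((k:ℝ)+1), by positivity, rfl⟩, ?_, hk⟩
  constructor <;> intro i <;> simp only <;> nlinarith [Nat.cast_nonneg (α := ℝ) k]

lemma pair_pos {p₀ : ℝ} (hp : 1 < p₀) {f w : (Fin n → ℝ) → ℝ≥0∞} {y N : ℝ≥0∞}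
    (hf : Measurable f) (hN0 : N ≠ 0) (hNt : N ≠ ⊤)
    (hwN : ∀ x, w x ≤ N) (hw0 : ∫⁻ x, w x ≠ 0) :
    twoApC p₀ (fun x => maxOp w x * (max (f x / y) 1) ^ (1 - p₀)) w ≠ 0 := by
  have hp1 : p₀ ≠ 1 := hp.ne'
  have hps : (0:ℝ) < p₀ - 1 := by linarith
  unfold twoApC
  rw [if_neg hp1]
  set β := 1 - p₀ / (p₀ - 1) with hβdef
  have hβneg : β < 0 := by
    have h2 : (0:ℝ) < p₀ - 1 := hps
    have : 1 < p₀ / (p₀ - 1) := (one_lt_div h2).mpr (by linarith)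
    simp only [hβdef]; linarith
  obtain ⟨Q, hQ, _, hQ0⟩ := exists_cube_mem_ne_zero hw0 0
  have havgw0 : cubeAvg w Q ≠ 0 := (ENNReal.div_pos hQ0 (isCube_volume hQ).2).ne'
  have hu₁_le : ∀ x, maxOp w x * (max (f x / y) 1) ^ (1 - p₀) ≤ N := by
    intro x
    calc maxOp w x * (max (f x / y) 1) ^ (1 - p₀) ≤ N * 1 := by
          refine mul_le_mul' (maxOp_le_const hwN x) ?_
          have := rpow_anti (le_max_right (f x / y) 1) (show 1 - p₀ ≤ 0 by linarith)
          rwa [ENNReal.one_rpow] at this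
      _ = N := mul_one N
  have hlow : ∀ x, (N:ℝ≥0∞) ^ β ≤ (maxOp w x * (max (f x / y) 1) ^ (1 - p₀)) ^ β :=
    fun x => rpow_anti (hu₁_le x) hβneg.le
  have havg_low : (N:ℝ≥0∞) ^ β ≤ cubeAvg (fun x => (maxOp w x * (max (f x / y) 1) ^ (1 - p₀)) ^ β) Q := by
    have : cubeAvg (fun _ => (N:ℝ≥0∞) ^ β) Q ≤ cubeAvg (fun x => (maxOp w x * (max (f x / y) 1) ^ (1 - p₀)) ^ β) Q := by
      refine cubeAvg_mono_on ?_ (fun x _ => hlow x)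
      exact ((measurable_maxOp w).mul (((hf.div_const y).max measurable_const).pow_const _)).pow_const β
    rwa [cubeAvg_const _ hQ] at this
  have hterm : cubeAvg w Q * (cubeAvg (fun x => (maxOp w x * (max (f x / y) 1) ^ (1 - p₀)) ^ β) Q) ^ (p₀ - 1) ≠ 0 := by
    refine mul_ne_zero havgw0 ?_
    have h1 : (N:ℝ≥0∞) ^ β ≠ 0 := (rpow_pos_finite hN0 hNt β).1
    intro hzero
    apply h1
    have h2 := ENNReal.rpow_le_rpow havg_low hps.le
    rw [hzero] at h2
    have h3 : ((N:ℝ≥0∞) ^ β) ^ (p₀ - 1) = 0 := le_antisymm h2 (zero_le)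
    rcases ENNReal.rpow_eq_zero_iff.mp h3 with ⟨h4, _⟩ | ⟨h4, h5⟩
    · exact h4
    · exact absurd h4 (rpow_pos_finite hN0 hNt β).2
  intro hsup
  apply hterm
  refine le_antisymm ?_ (zero_le)
  rw [← hsup]
  exact le_iSup_of_le Q (le_iSup_of_le hQ le_rfl)

lemma pair_integrand {p₀ : ℝ} (hp : 1 ≤ p₀) {y : ℝ≥0∞} (hy0 : y ≠ 0) (hyt : y ≠ ⊤)
    (f M : (Fin n → ℝ) → ℝ≥0∞) (x : Fin n → ℝ) :
    f x ^ p₀ * (M x * (max (f x / y) 1) ^ (1 - p₀)) ≤ y ^ (p₀ - 1) * (f x * M x) := by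
  by_cases hfy : f x ≤ y
  · have hft : f x ≠ ⊤ := (lt_of_le_of_lt hfy hyt.lt_top).ne
    have h1 : (max (f x / y) 1) ^ (1 - p₀) ≤ 1 := by
      have := rpow_anti (le_max_right (f x / y) 1) (show 1 - p₀ ≤ 0 by linarith)
      rwa [ENNReal.one_rpow] at this
    by_cases hf0 : f x = 0
    · rw [hf0, ENNReal.zero_rpow_of_pos (by linarith), zero_mul]
      exact zero_le
    · have h2 : f x ^ p₀ = f x ^ (p₀ - 1) * f x := by
        have h4 := ENNReal.rpow_add (p₀ - 1) 1 hf0 hft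
        rw [sub_add_cancel] at h4
        rw [h4, ENNReal.rpow_one]
      calc f x ^ p₀ * (M x * (max (f x / y) 1) ^ (1 - p₀))
          ≤ f x ^ p₀ * (M x * 1) := mul_le_mul_right (mul_le_mul_right h1 _) _
        _ = f x ^ (p₀ - 1) * f x * M x := by rw [mul_one, h2]
        _ ≤ y ^ (p₀ - 1) * f x * M x :=
            mul_le_mul_left (mul_le_mul_left (ENNReal.rpow_le_rpow hfy (by linarith)) _) _
        _ ≤ y ^ (p₀ - 1) * (f x * M x) := le_of_eq (mul_assoc _ _ _)
  · push_neg at hfy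
    have hf0 : f x ≠ 0 := fun h => absurd hfy (by simp [h])
    have hmax : max (f x / y) 1 = f x / y := by
      refine max_eq_left ?_
      rw [ENNReal.le_div_iff_mul_le (Or.inl hy0) (Or.inl hyt), one_mul]
      exact hfy.le
    rw [hmax]
    by_cases hft : f x = ⊤
    · have hdiv : (⊤ : ℝ≥0∞) / y = ⊤ := ENNReal.top_div_of_ne_top hyt
      rw [hft, hdiv]
      rcases eq_or_lt_of_le hp with hp1 | hp1
      · rw [← hp1]
        simp
      · simp only [ENNReal.top_rpow_of_neg (show (1:ℝ) - p₀ < 0 by linarith), mul_zero]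
        exact zero_le
    · have heq : f x ^ p₀ * (f x / y) ^ (1 - p₀) = y ^ (p₀ - 1) * f x := by
        rw [div_eq_mul_inv, ENNReal.mul_rpow_of_ne_zero hf0 (ENNReal.inv_ne_zero.mpr hyt),
          ENNReal.inv_rpow, ← ENNReal.rpow_neg, ← mul_assoc,
          ← ENNReal.rpow_add _ _ hf0 hft]
        have : p₀ + (1 - p₀) = 1 := by ring
        rw [this, ENNReal.rpow_one]
        have : -(1 - p₀) = p₀ - 1 := by ring
        rw [this, mul_comm]
      calc f x ^ p₀ * (M x * (f x / y) ^ (1 - p₀))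
          = f x ^ p₀ * (f x / y) ^ (1 - p₀) * M x := by ring
        _ = y ^ (p₀ - 1) * f x * M x := by rw [heq]
        _ ≤ y ^ (p₀ - 1) * (f x * M x) := le_of_eq (mul_assoc _ _ _)


lemma twoApC_smul {p₀ : ℝ} (hp : 1 < p₀) {c : ℝ≥0∞} (hc0 : c ≠ 0) (hct : c ≠ ⊤)
    (u₁ u₂ : (Fin n → ℝ) → ℝ≥0∞) :
    twoApC p₀ (fun x => c * u₁ x) u₂ = c⁻¹ * twoApC p₀ u₁ u₂ := by
  have hp1 : p₀ ≠ 1 := hp.ne'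
  have hps : (0:ℝ) < p₀ - 1 := by linarith
  unfold twoApC
  rw [if_neg hp1, if_neg hp1]
  set β := 1 - p₀ / (p₀ - 1) with hβdef
  have hmulm1 : β * (p₀ - 1) = -1 := by
    have : β = -(1 / (p₀ - 1)) := by rw [hβdef]; field_simp; ring
    rw [this]; field_simp
  have hcβ := rpow_pos_finite hc0 hct β
  have key : ∀ Q : Set (Fin n → ℝ),
      cubeAvg u₂ Q * (cubeAvg (fun x => (c * u₁ x) ^ β) Q) ^ (p₀ - 1)
      = c⁻¹ * (cubeAvg u₂ Q * (cubeAvg (fun x => u₁ x ^ β) Q) ^ (p₀ - 1)) := by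
    intro Q
    have h1 : (fun x => (c * u₁ x) ^ β) = fun x => c ^ β * u₁ x ^ β := by
      funext x; exact mul_rpow_pos hc0 hct _ β
    rw [h1, cubeAvg_const_mul hcβ.2, mul_rpow_pos hcβ.1 hcβ.2, ← ENNReal.rpow_mul, hmulm1,
      ENNReal.rpow_neg_one, mul_left_comm]
  calc (⨆ (Q : Set (Fin n → ℝ)) (_ : IsCube Q),
        cubeAvg u₂ Q * (cubeAvg (fun x => (c * u₁ x) ^ β) Q) ^ (p₀ - 1))
      = ⨆ (Q : Set (Fin n → ℝ)) (_ : IsCube Q),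
        c⁻¹ * (cubeAvg u₂ Q * (cubeAvg (fun x => u₁ x ^ β) Q) ^ (p₀ - 1)) := by
        refine iSup_congr fun Q => iSup_congr fun _ => key Q
    _ = c⁻¹ * ⨆ (Q : Set (Fin n → ℝ)) (_ : IsCube Q),
        cubeAvg u₂ Q * (cubeAvg (fun x => u₁ x ^ β) Q) ^ (p₀ - 1) := by
        rw [ENNReal.mul_iSup]
        refine iSup_congr fun Q => ?_
        rw [ENNReal.mul_iSup]

lemma le_one_of_ae_le_mul {c : ℝ≥0∞} {h : (Fin n → ℝ) → ℝ≥0∞}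
    (hpos : ∀ x, 0 < h x) (hfin : ∀ x, h x ≠ ⊤)
    (hae : ∀ᵐ x ∂(volume : Measure (Fin n → ℝ)), h x ≤ c * h x) : 1 ≤ c := by
  obtain ⟨x, hx⟩ := ae_exists hae
  calc (1:ℝ≥0∞) = h x * (h x)⁻¹ := (ENNReal.mul_inv_cancel (hpos x).ne' (hfin x)).symm
    _ ≤ c * h x * (h x)⁻¹ := mul_le_mul_left hx _
    _ = c * (h x * (h x)⁻¹) := mul_assoc _ _ _
    _ = c := by rw [ENNReal.mul_inv_cancel (hpos x).ne' (hfin x), mul_one]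

lemma twoApC_one_maxOp {w : (Fin n → ℝ) → ℝ≥0∞}
    (hpos : ∀ x, 0 < maxOp w x) (hfin : ∀ x, maxOp w x ≠ ⊤) :
    twoApC 1 (maxOp w) w = 1 := by
  unfold twoApC
  rw [if_pos rfl]
  apply le_antisymm
  · exact sInf_le (ae_of_all _ fun x => le_of_eq (one_mul _).symm)
  · exact le_sInf fun C hC => le_one_of_ae_le_mul hpos hfin hC

lemma twoApC_one_one {p₀ : ℝ} (hp : 1 ≤ p₀) :
    twoApC (n := n) p₀ (fun _ => 1) (fun _ => 1) = 1 := by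
  have hQ₀ : IsCube (Icc (0 : Fin n → ℝ) (fun i => (0 : Fin n → ℝ) i + 1)) := ⟨0, 1, one_pos, rfl⟩
  unfold twoApC
  by_cases hp1 : p₀ = 1
  · rw [if_pos hp1]
    apply le_antisymm
    · refine sInf_le (ae_of_all _ fun x => ?_)
      rw [maxOp_one, one_mul]
    · refine le_sInf fun C hC => ?_
      have : ∀ᵐ x ∂(volume : Measure (Fin n → ℝ)), (1:ℝ≥0∞) ≤ C * 1 := by
        filter_upwards [hC] with x hx
        rwa [maxOp_one] at hx
      obtain ⟨x, hx⟩ := ae_exists this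
      rwa [mul_one] at hx
  · rw [if_neg hp1]
    have key : ∀ Q : Set (Fin n → ℝ), IsCube Q →
        cubeAvg (fun _ => (1:ℝ≥0∞)) Q * (cubeAvg (fun x => (1:ℝ≥0∞) ^ (1 - p₀ / (p₀ - 1))) Q) ^ (p₀ - 1) = 1 := by
      intro Q hQ
      have h1 : (fun _ : Fin n → ℝ => (1:ℝ≥0∞) ^ (1 - p₀ / (p₀ - 1))) = fun _ => (1:ℝ≥0∞) := by
        funext x; rw [ENNReal.one_rpow]
      rw [h1, cubeAvg_const _ hQ, ENNReal.one_rpow, mul_one]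
    apply le_antisymm
    · exact iSup_le fun Q => iSup_le fun hQ => le_of_eq (key Q hQ)
    · exact le_iSup_of_le _ (le_iSup_of_le hQ₀ (le_of_eq (key _ hQ₀).symm))


lemma weighted_holder {p : ℝ} (hp : 1 < p) {f F u : (Fin n → ℝ) → ℝ≥0∞}
    (hf : Measurable f) (hF : Measurable F) (hu : Measurable u)
    (hFpos : ∀ x, 0 < F x)
    (h0 : ∫⁻ x, f x ^ p * u x ≠ 0) (ht : ∫⁻ x, f x ^ p * u x ≠ ⊤) :
    ∫⁻ x, f x * F x ≤ (∫⁻ x, f x ^ p * u x) ^ (1/p)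
      * (∫⁻ x, F x ^ (p/(p-1)) * u x ^ (1 - p/(p-1))) ^ (1/(p/(p-1))) := by
  set q := p/(p-1) with hq
  have hpq : p.HolderConjugate q := Real.HolderConjugate.conjExponent hp
  have hq1 : 1 < q := hpq.symm.lt
  set A0 := {x : Fin n → ℝ | u x = 0} with hA0def
  set AT := {x : Fin n → ℝ | u x = ⊤} with hATdef
  have hA0m : MeasurableSet A0 := hu (measurableSet_singleton 0)
  have hATm : MeasurableSet AT := hu (measurableSet_singleton ⊤)
  by_cases hA0 : volume A0 = 0
  swap
  · -- second factor is ⊤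
    have h2 : ∫⁻ x, F x ^ q * u x ^ (1 - q) = ⊤ := by
      have hone : ∀ x ∈ A0, (⊤:ℝ≥0∞) ≤ F x ^ q * u x ^ (1 - q) := by
        intro x hx
        have hux : u x = 0 := hx
        have hFq : F x ^ q ≠ 0 := by
          intro h
          rcases ENNReal.rpow_eq_zero_iff.mp h with ⟨h1, _⟩ | ⟨_, h2⟩
          · exact (hFpos x).ne' h1
          · linarith
        rw [hux, ENNReal.zero_rpow_of_neg (by linarith), ENNReal.mul_top hFq]
      have hbig : ⊤ * volume A0 ≤ ∫⁻ x in A0, F x ^ q * u x ^ (1 - q) := by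
        rw [← setLIntegral_const A0 ⊤]
        exact setLIntegral_mono ((hF.pow_const q).mul (hu.pow_const (1 - q))) hone
      rw [ENNReal.top_mul hA0] at hbig
      have := le_trans hbig (setLIntegral_le_lintegral A0 _)
      exact le_antisymm le_top this
    rw [h2, ENNReal.top_rpow_of_pos (by positivity), ENNReal.mul_top (rpow_pos_finite h0 ht (1/p)).1]
    exact le_top
  · have hAT' : volume (AT ∩ {x | f x ≠ 0}) = 0 := by
      by_contra hAT
      apply ht
      have hone : ∀ x ∈ AT ∩ {x | f x ≠ 0}, (⊤:ℝ≥0∞) ≤ f x ^ p * u x := by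
        rintro x ⟨hx1, hx2⟩
        have hfp : f x ^ p ≠ 0 := by
          intro h
          rcases ENNReal.rpow_eq_zero_iff.mp h with ⟨h1, _⟩ | ⟨_, h2⟩
          · exact hx2 h1
          · linarith [hpq.pos]
        have hux : u x = ⊤ := hx1
        rw [hux, ENNReal.mul_top hfp]
      have hsetm : MeasurableSet (AT ∩ {x | f x ≠ 0}) :=
        hATm.inter ((hf (measurableSet_singleton 0)).compl)
      have hbig : ⊤ * volume (AT ∩ {x | f x ≠ 0}) ≤ ∫⁻ x in AT ∩ {x | f x ≠ 0}, f x ^ p * u x := by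
        rw [← setLIntegral_const _ ⊤]
        exact setLIntegral_mono ((hf.pow_const p).mul hu) hone
      rw [ENNReal.top_mul hAT] at hbig
      exact le_antisymm le_top (le_trans hbig (setLIntegral_le_lintegral _ _))
    set G := (A0 ∪ AT)ᶜ with hGdef
    have hGm : MeasurableSet G := (hA0m.union hATm).compl
    have hz1 : ∫⁻ x in A0, f x * F x = 0 := by
      have : (volume : Measure (Fin n → ℝ)).restrict A0 = 0 := Measure.restrict_eq_zero.mpr hA0
      rw [this, lintegral_zero_measure]
    have hz2 : ∫⁻ x in AT, f x * F x = 0 := by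
      have hae : ∀ᵐ x ∂((volume : Measure (Fin n → ℝ)).restrict AT), f x * F x = 0 := by
        rw [ae_iff, Measure.restrict_apply]
        · refine measure_mono_null ?_ hAT'
          intro x hx
          simp only [mem_inter_iff, mem_setOf_eq] at hx ⊢
          refine ⟨hx.2, fun h => hx.1 ?_⟩
          rw [h, zero_mul]
        · exact ((hf.mul hF) (measurableSet_singleton 0)).compl
      calc ∫⁻ x in AT, f x * F x = ∫⁻ _ in AT, 0 := lintegral_congr_ae hae
        _ = 0 := lintegral_zero
    have hsplit : ∫⁻ x, f x * F x
        ≤ (∫⁻ x in G, f x * F x) + ((∫⁻ x in A0, f x * F x) + (∫⁻ x in AT, f x * F x)) := by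
      calc ∫⁻ x, f x * F x = ∫⁻ x in univ, f x * F x := (setLIntegral_univ _).symm
        _ = ∫⁻ x in G ∪ (A0 ∪ AT), f x * F x := by rw [compl_union_self]
        _ ≤ (∫⁻ x in G, f x * F x) + ∫⁻ x in A0 ∪ AT, f x * F x := lintegral_union_le _ _ _
        _ ≤ _ := add_le_add_right (lintegral_union_le _ _ _) _
    rw [hz1, hz2, add_zero, add_zero] at hsplit
    refine le_trans hsplit ?_
    -- Hölder on G
    have hptw : ∀ x ∈ G, f x * F x = (f x * u x ^ (1/p)) * (F x * (u x ^ (1 - q)) ^ (1/q)) := by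
      intro x hx
      simp only [hGdef, mem_compl_iff, mem_union, mem_setOf_eq, not_or] at hx
      have hu0 : u x ≠ 0 := hx.1
      have hut : u x ≠ ⊤ := hx.2
      have harith : 1/p + (1 - q)*(1/q) = 0 := by
        have hq0 : q ≠ 0 := hpq.symm.pos.ne'
        have h7 : 1/p + 1/q = 1 := by
          rw [one_div, one_div]; exact hpq.inv_add_inv_eq_one
        field_simp
        field_simp at h7
        linarith
      have h5 : u x ^ (1/p) * u x ^ ((1 - q)*(1/q)) = 1 := by
        rw [← ENNReal.rpow_add _ _ hu0 hut, harith, ENNReal.rpow_zero]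
      calc f x * F x = f x * F x * 1 := (mul_one _).symm
        _ = f x * F x * (u x ^ (1/p) * u x ^ ((1 - q)*(1/q))) := by rw [h5]
        _ = (f x * u x ^ (1/p)) * (F x * u x ^ ((1 - q)*(1/q))) := by ring
        _ = (f x * u x ^ (1/p)) * (F x * (u x ^ (1 - q)) ^ (1/q)) := by
            rw [ENNReal.rpow_mul]
    have hcongr : ∫⁻ x in G, f x * F x
        = ∫⁻ x in G, (f x * u x ^ (1/p)) * (F x * (u x ^ (1 - q)) ^ (1/q)) :=
      setLIntegral_congr_fun hGm hptw
    have hH := ENNReal.lintegral_mul_le_Lp_mul_Lq ((volume : Measure (Fin n → ℝ)).restrict G) hpq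
      ((hf.mul (hu.pow_const (1/p))).aemeasurable)
      ((hF.mul ((hu.pow_const (1 - q)).pow_const (1/q))).aemeasurable)
    have hid1 : ∀ x : Fin n → ℝ, (f x * u x ^ (1/p)) ^ p = f x ^ p * u x := by
      intro x
      rw [ENNReal.mul_rpow_of_nonneg _ _ (le_of_lt hpq.pos), ← ENNReal.rpow_mul,
        one_div_mul_cancel hpq.pos.ne', ENNReal.rpow_one]
    have hid2 : ∀ x : Fin n → ℝ, (F x * (u x ^ (1 - q)) ^ (1/q)) ^ q = F x ^ q * u x ^ (1 - q) := by
      intro x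
      rw [ENNReal.mul_rpow_of_nonneg _ _ (le_of_lt hpq.symm.pos), ← ENNReal.rpow_mul,
        one_div_mul_cancel hpq.symm.pos.ne', ENNReal.rpow_one]
    calc ∫⁻ x in G, f x * F x
        = ∫⁻ x in G, (f x * u x ^ (1/p)) * (F x * (u x ^ (1 - q)) ^ (1/q)) := hcongr
      _ ≤ (∫⁻ x in G, (f x * u x ^ (1/p)) ^ p) ^ (1/p)
          * (∫⁻ x in G, (F x * (u x ^ (1 - q)) ^ (1/q)) ^ q) ^ (1/q) := hH
      _ = (∫⁻ x in G, f x ^ p * u x) ^ (1/p)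
          * (∫⁻ x in G, F x ^ q * u x ^ (1 - q)) ^ (1/q) := by
          simp_rw [hid1, hid2]
      _ ≤ (∫⁻ x, f x ^ p * u x) ^ (1/p) * (∫⁻ x, F x ^ q * u x ^ (1 - q)) ^ (1/q) := by
          refine mul_le_mul' ?_ ?_ <;>
            exact ENNReal.rpow_le_rpow (setLIntegral_le_lintegral _ _) (by positivity)


lemma iSup_rpow {c : ℝ} (hc : 0 < c) (f : ℕ → ℝ≥0∞) : (⨆ k, f k) ^ c = ⨆ k, f k ^ c := by
  apply le_antisymm
  · have h1 : (⨆ k, f k) ≤ (⨆ k, f k ^ c) ^ (1/c) := by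
      refine iSup_le fun k => ?_
      calc f k = (f k ^ c) ^ (1/c) := by
            rw [← ENNReal.rpow_mul, mul_one_div_cancel hc.ne', ENNReal.rpow_one]
        _ ≤ (⨆ k, f k ^ c) ^ (1/c) :=
            ENNReal.rpow_le_rpow (le_iSup (fun k => f k ^ c) k) (by positivity)
    calc (⨆ k, f k) ^ c ≤ ((⨆ k, f k ^ c) ^ (1/c)) ^ c := ENNReal.rpow_le_rpow h1 hc.le
      _ = ⨆ k, f k ^ c := by
          rw [← ENNReal.rpow_mul, one_div_mul_cancel hc.ne', ENNReal.rpow_one]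
  · exact iSup_le fun k => ENNReal.rpow_le_rpow (le_iSup _ k) hc.le

lemma meas_zero_of_wkNorm_zero {P : ℝ} (hP : 0 < P) {W G : (Fin n → ℝ) → ℝ≥0∞}
    (h : wkNorm P W G = 0) {y : ℝ≥0∞} (hy0 : y ≠ 0) :
    wMeas W {x | y < G x} = 0 := by
  have h1 : y * (wMeas W {x | y < G x}) ^ (1/P) = 0 := by
    refine le_antisymm (le_trans ?_ h.le) (zero_le)
    exact le_iSup (fun y => y * (wMeas W {x | y < G x}) ^ (1/P)) y
  rcases mul_eq_zero.mp h1 with h2 | h2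
  · exact absurd h2 hy0
  · rcases ENNReal.rpow_eq_zero_iff.mp h2 with ⟨h3, _⟩ | ⟨_, h4⟩
    · exact h3
    · exfalso
      have : (0:ℝ) < 1/P := by positivity
      linarith

lemma wMeas_null {v : (Fin n → ℝ) → ℝ≥0∞} {E : Set (Fin n → ℝ)} (h : volume E = 0) :
    wMeas v E = 0 := by
  unfold wMeas
  rw [Measure.restrict_eq_zero.mpr h, lintegral_zero_measure]

lemma wkNorm_eq_zero_of_lintegral {P : ℝ} (hP : 0 < P) {W G : (Fin n → ℝ) → ℝ≥0∞}
    (h : ∫⁻ x, W x = 0) : wkNorm P W G = 0 := by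
  refine le_antisymm (iSup_le fun y => ?_) (zero_le)
  have h1 : wMeas W {x | y < G x} = 0 :=
    le_antisymm (le_trans (setLIntegral_le_lintegral _ _) h.le) (zero_le)
  rw [h1, ENNReal.zero_rpow_of_pos (by positivity), mul_zero]


lemma claimB {p₀ p q : ℝ} (hp₀ : 1 ≤ p₀) (hp : 1 < p) (hq : 1 < q)
    {f g u v : (Fin n → ℝ) → ℝ≥0∞} (hf : Measurable f) (hg : Measurable g)
    (hu : Measurable u) (hv : Measurable v)
    (H : ∀ u₁ u₂ : (Fin n → ℝ) → ℝ≥0∞, Measurable u₁ → Measurable u₂ →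
      twoApC p₀ u₁ u₂ = 1 → wkNorm p₀ u₂ g ≤ stNorm p₀ u₁ f)
    {C₂ : ℝ≥0∞} (hC₂ : ∀ h : (Fin n → ℝ) → ℝ≥0∞, Measurable h →
      stNorm (p / (p - 1)) (fun x => u x ^ (1 - p / (p - 1))) (maxOp h)
        ≤ C₂ * stNorm (q / (q - 1)) (fun x => v x ^ (1 - q / (q - 1))) h)
    {F : ℝ≥0∞} (hFdef : F = ∫⁻ x, f x ^ p * u x) (hF0 : F ≠ 0) (hFt : F ≠ ⊤)
    {y : ℝ≥0∞} (hy0 : y ≠ 0) (hyt : y ≠ ⊤)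
    {w : (Fin n → ℝ) → ℝ≥0∞} {N : ℝ≥0∞} (hN0 : N ≠ 0) (hNt : N ≠ ⊤)
    (hw_meas : Measurable w) (hwN : ∀ x, w x ≤ N)
    (hWt : ∫⁻ x, w x ≠ ⊤)
    (hwv : ∀ x, w x ≤ v x)
    (hsupp : ∀ x, w x ≠ 0 → maxOp f x ≤ y)
    (hsuppE : ∀ x, w x ≠ 0 → y < g x) :
    y * (∫⁻ x, w x) ^ (1/q) ≤ (2:ℝ≥0∞) ^ (p₀ - 1) * C₂ * F ^ (1/p) := by
  have hq0 : (0:ℝ) < 1/q := by positivity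
  have hq'pos : (0:ℝ) < 1/(q/(q-1)) := by
    have h9 : (0:ℝ) < q/(q-1) := div_pos (by linarith) (by linarith)
    positivity
  by_cases hw0 : ∫⁻ x, w x = 0
  · rw [hw0, ENNReal.zero_rpow_of_pos hq0, mul_zero]
    exact zero_le
  set W := ∫⁻ x, w x with hW
  have hMw_meas : Measurable (maxOp w) := measurable_maxOp w
  have hMw_pos : ∀ x, 0 < maxOp w x := maxOp_pos hw0
  have hMw_fin : ∀ x, maxOp w x ≠ ⊤ :=
    fun x => (lt_of_le_of_lt (maxOp_le_const hwN x) hNt.lt_top).ne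
  have hwE : wMeas w {x | y < g x} = W := by
    unfold wMeas
    have hind : ({x | y < g x}).indicator w = w :=
      indicator_eq_self.mpr (fun x hx => hsuppE x hx)
    rw [← lintegral_indicator (measurableSet_lt measurable_const hg), hind]
  have htwo_ne : ((2:ℝ≥0∞) ^ (p₀ - 1)) ≠ ⊤ :=
    ENNReal.rpow_ne_top_of_nonneg (by linarith) ENNReal.ofNat_ne_top
  -- Step 1
  have step1 : y * W ≤ (2:ℝ≥0∞) ^ (p₀ - 1) * ∫⁻ x, f x * maxOp w x := by
    rcases eq_or_lt_of_le hp₀ with hp₀1 | hp₀1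
    · subst hp₀1
      have htw : twoApC 1 (maxOp w) w = 1 := twoApC_one_maxOp hMw_pos hMw_fin
      have hH := H (maxOp w) w hMw_meas hw_meas htw
      have hL : y * W ^ ((1:ℝ)/1) ≤ wkNorm 1 w g := by
        have h5 := le_iSup (fun z => z * (wMeas w {x | z < g x}) ^ ((1:ℝ)/1)) y
        rw [hwE] at h5
        exact h5
      rw [show ((1:ℝ)/1) = 1 by norm_num, ENNReal.rpow_one] at hL
      have hR : stNorm 1 (maxOp w) f = ∫⁻ x, f x * maxOp w x := by
        unfold stNorm
        rw [show ((1:ℝ)/1) = 1 by norm_num, ENNReal.rpow_one]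
        congr 1
        funext x
        rw [ENNReal.rpow_one]
      calc y * W ≤ wkNorm 1 w g := hL
        _ ≤ stNorm 1 (maxOp w) f := hH
        _ = ∫⁻ x, f x * maxOp w x := hR
        _ = 1 * ∫⁻ x, f x * maxOp w x := (one_mul _).symm
        _ = (2:ℝ≥0∞) ^ ((1:ℝ) - 1) * ∫⁻ x, f x * maxOp w x := by
            rw [sub_self, ENNReal.rpow_zero]
    · -- 1 < p₀
      have hps : (0:ℝ) < p₀ - 1 := by linarith
      have hp₀0 : p₀ ≠ 0 := by positivity
      set u₁ := fun x => maxOp w x * (max (f x / y) 1) ^ (1 - p₀) with hu₁def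
      have hu₁_meas : Measurable u₁ :=
        hMw_meas.mul (((hf.div_const y).max measurable_const).pow_const _)
      set A := twoApC p₀ u₁ w with hAdef
      have hA_le : A ≤ (2:ℝ≥0∞) ^ (p₀ - 1) :=
        pair_upper hp₀1 hf hy0 hyt hNt hwN hw0 hsupp
      have hA0 : A ≠ 0 := pair_pos hp₀1 hf hN0 hNt hwN hw0
      have hAt : A ≠ ⊤ := (lt_of_le_of_lt hA_le htwo_ne.lt_top).ne
      have htw : twoApC p₀ (fun x => A * u₁ x) w = 1 := by
        rw [twoApC_smul hp₀1 hA0 hAt u₁ w, ← hAdef, ENNReal.inv_mul_cancel hA0 hAt]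
      have hH := H (fun x => A * u₁ x) w (measurable_const.mul hu₁_meas) hw_meas htw
      have hL : y * W ^ (1/p₀) ≤ wkNorm p₀ w g := by
        have h5 := le_iSup (fun z => z * (wMeas w {x | z < g x}) ^ (1/p₀)) y
        rw [hwE] at h5
        exact h5
      have hR : stNorm p₀ (fun x => A * u₁ x) f
          ≤ (A * (y ^ (p₀ - 1) * ∫⁻ x, f x * maxOp w x)) ^ (1/p₀) := by
        unfold stNorm
        refine ENNReal.rpow_le_rpow ?_ (by positivity)
        have h6 : ∫⁻ x, f x ^ p₀ * (A * u₁ x) = A * ∫⁻ x, f x ^ p₀ * u₁ x := by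
          rw [← lintegral_const_mul' A _ hAt]
          congr 1
          funext x
          ring
        rw [h6]
        refine mul_le_mul_right ?_ A
        calc ∫⁻ x, f x ^ p₀ * u₁ x
            ≤ ∫⁻ x, y ^ (p₀ - 1) * (f x * maxOp w x) :=
              lintegral_mono fun x => pair_integrand hp₀ hy0 hyt f (maxOp w) x
          _ = y ^ (p₀ - 1) * ∫⁻ x, f x * maxOp w x :=
              lintegral_const_mul' _ _ (rpow_pos_finite hy0 hyt (p₀ - 1)).2
      have hcomb : y * W ^ (1/p₀) ≤ ((2:ℝ≥0∞) ^ (p₀-1) * (y ^ (p₀ - 1) * ∫⁻ x, f x * maxOp w x)) ^ (1/p₀) := by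
        refine le_trans (le_trans hL hH) (le_trans hR ?_)
        exact ENNReal.rpow_le_rpow (mul_le_mul_left hA_le _) (by positivity)
      -- raise to p₀
      have hpow := ENNReal.rpow_le_rpow hcomb (le_of_lt (lt_trans one_pos hp₀1))
      rw [ENNReal.mul_rpow_of_nonneg _ _ (by positivity : (0:ℝ) ≤ p₀), ← ENNReal.rpow_mul,
        ← ENNReal.rpow_mul, one_div_mul_cancel hp₀0, ENNReal.rpow_one, ENNReal.rpow_one] at hpow
      -- hpow : y ^ p₀ * W ≤ 2^{p₀-1} * (y^{p₀-1} * I)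
      have hD := rpow_pos_finite hy0 hyt (p₀ - 1)
      have hsplit : y ^ p₀ = y ^ (p₀ - 1) * y := by
        have h4 := ENNReal.rpow_add (p₀ - 1) 1 hy0 hyt
        rw [sub_add_cancel] at h4
        rw [h4, ENNReal.rpow_one]
      rw [hsplit] at hpow
      -- y^{p₀-1} * y * W ≤ 2^{p₀-1} * (y^{p₀-1} * I)
      have hrearr : y ^ (p₀ - 1) * (y * W) ≤ y ^ (p₀ - 1) * ((2:ℝ≥0∞) ^ (p₀-1) * ∫⁻ x, f x * maxOp w x) := by
        calc y ^ (p₀ - 1) * (y * W) = y ^ (p₀ - 1) * y * W := (mul_assoc _ _ _).symm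
          _ ≤ (2:ℝ≥0∞) ^ (p₀-1) * (y ^ (p₀ - 1) * ∫⁻ x, f x * maxOp w x) := hpow
          _ = y ^ (p₀ - 1) * ((2:ℝ≥0∞) ^ (p₀-1) * ∫⁻ x, f x * maxOp w x) := by ring
      exact (ENNReal.mul_le_mul_iff_right hD.1 hD.2).mp hrearr
  -- Step 2 : Hölder
  have step2 : ∫⁻ x, f x * maxOp w x
      ≤ F ^ (1/p) * (∫⁻ x, (maxOp w x) ^ (p/(p-1)) * u x ^ (1 - p/(p-1))) ^ (1/(p/(p-1))) := by
    rw [hFdef]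
    exact weighted_holder hp hf hMw_meas hu hMw_pos (hFdef ▸ hF0) (hFdef ▸ hFt)
  -- Step 3 : hS hypothesis
  have step3 : (∫⁻ x, (maxOp w x) ^ (p/(p-1)) * u x ^ (1 - p/(p-1))) ^ (1/(p/(p-1)))
      ≤ C₂ * (∫⁻ x, w x ^ (q/(q-1)) * v x ^ (1 - q/(q-1))) ^ (1/(q/(q-1))) :=
    hC₂ w hw_meas
  -- Step 4
  have step4 : (∫⁻ x, w x ^ (q/(q-1)) * v x ^ (1 - q/(q-1))) ≤ W := by
    rw [hW]
    refine lintegral_mono fun x => ?_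
    set q' := q/(q-1) with hq'def
    have hq'1 : 1 < q' := (Real.HolderConjugate.conjExponent hq).symm.lt
    by_cases hvt : v x = ⊤
    · rw [hvt, ENNReal.top_rpow_of_neg (by linarith), mul_zero]
      exact zero_le
    · by_cases hwx0 : w x = 0
      · rw [hwx0, ENNReal.zero_rpow_of_pos (by linarith), zero_mul]
      · have hv0 : v x ≠ 0 := fun h => hwx0 (le_antisymm (h ▸ hwv x) (zero_le))
        have hwxt : w x ≠ ⊤ := (lt_of_le_of_lt (hwv x) (lt_top_iff_ne_top.mpr hvt)).ne
        have hsp : w x ^ q' = w x * w x ^ (q' - 1) := by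
          have h4 := ENNReal.rpow_add (q' - 1) 1 hwx0 hwxt
          rw [sub_add_cancel] at h4
          rw [h4, ENNReal.rpow_one, mul_comm]
        rw [hsp, mul_assoc]
        calc w x * (w x ^ (q' - 1) * v x ^ (1 - q'))
            ≤ w x * (v x ^ (q' - 1) * v x ^ (1 - q')) := by
              refine mul_le_mul_right (mul_le_mul_left ?_ _) _
              exact ENNReal.rpow_le_rpow (hwv x) (by linarith)
          _ = w x * 1 := by
              rw [← ENNReal.rpow_add _ _ hv0 hvt]
              norm_num
          _ = w x := mul_one _
  -- Combine
  have hWfin : W ≠ ⊤ := hWt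
  have hWq' := rpow_pos_finite hw0 hWfin (1/(q/(q-1)))
  have hKey : y * W ≤ (2:ℝ≥0∞) ^ (p₀ - 1) * C₂ * F ^ (1/p) * W ^ (1/(q/(q-1))) := by
    calc y * W ≤ (2:ℝ≥0∞) ^ (p₀ - 1) * ∫⁻ x, f x * maxOp w x := step1
      _ ≤ (2:ℝ≥0∞) ^ (p₀ - 1) * (F ^ (1/p) * (C₂ * (∫⁻ x, w x ^ (q/(q-1)) * v x ^ (1 - q/(q-1))) ^ (1/(q/(q-1))))) := by
          refine mul_le_mul_right (le_trans step2 (mul_le_mul_right step3 _)) _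
      _ ≤ (2:ℝ≥0∞) ^ (p₀ - 1) * (F ^ (1/p) * (C₂ * W ^ (1/(q/(q-1))))) := by
          refine mul_le_mul_right (mul_le_mul_right (mul_le_mul_right ?_ _) _) _
          exact ENNReal.rpow_le_rpow step4 hq'pos.le
      _ = (2:ℝ≥0∞) ^ (p₀ - 1) * C₂ * F ^ (1/p) * W ^ (1/(q/(q-1))) := by ring
  -- divide
  have hWsplit : W = W ^ (1/q) * W ^ (1/(q/(q-1))) := by
    rw [← ENNReal.rpow_add _ _ hw0 hWfin]
    have : 1/q + 1/(q/(q-1)) = 1 := by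
      rw [one_div, one_div]
      exact (Real.HolderConjugate.conjExponent hq).inv_add_inv_eq_one
    rw [this, ENNReal.rpow_one]
  have hfinal : y * W ^ (1/q) * W ^ (1/(q/(q-1)))
      ≤ (2:ℝ≥0∞) ^ (p₀ - 1) * C₂ * F ^ (1/p) * W ^ (1/(q/(q-1))) := by
    calc y * W ^ (1/q) * W ^ (1/(q/(q-1))) = y * W := by rw [mul_assoc, ← hWsplit]
      _ ≤ _ := hKey
  exact (ENNReal.mul_le_mul_iff_left hWq'.1 hWq'.2).mp hfinal


theorem main {p₀ : ℝ} (hp₀ : 1 ≤ p₀)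
    (f g : (Fin n → ℝ) → ℝ≥0∞) (hf : Measurable f) (hg : Measurable g)
    (H : ∀ u₁ u₂ : (Fin n → ℝ) → ℝ≥0∞, Measurable u₁ → Measurable u₂ →
      twoApC p₀ u₁ u₂ = 1 → wkNorm p₀ u₂ g ≤ stNorm p₀ u₁ f)
    (p q : ℝ) (hp : 1 < p) (hq : 1 < q)
    (u v : (Fin n → ℝ) → ℝ≥0∞) (hu : Measurable u) (hv : Measurable v)
    (hApq : ∃ C : ℝ≥0∞, C < ⊤ ∧ ∀ h : (Fin n → ℝ) → ℝ≥0∞, Measurable h →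
      wkNorm q v (maxOp h) ≤ C * stNorm p u h)
    (hS : ∃ C : ℝ≥0∞, C < ⊤ ∧ ∀ h : (Fin n → ℝ) → ℝ≥0∞, Measurable h →
      stNorm (p / (p - 1)) (fun x => u x ^ (1 - p / (p - 1))) (maxOp h)
        ≤ C * stNorm (q / (q - 1)) (fun x => v x ^ (1 - q / (q - 1))) h) :
    ∃ C : ℝ≥0∞, C < ⊤ ∧ wkNorm q v g ≤ C * stNorm p u f := by
  obtain ⟨C₁, hC₁t, hC₁⟩ := hApq
  obtain ⟨C₂, hC₂t, hC₂⟩ := hS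
  have htwo_ne : ((2:ℝ≥0∞) ^ (p₀ - 1)) ≠ ⊤ :=
    ENNReal.rpow_ne_top_of_nonneg (by linarith) ENNReal.ofNat_ne_top
  set C := C₁ + (2:ℝ≥0∞) ^ (p₀ - 1) * C₂ + 1 with hCdef
  have hCt : C < ⊤ := by
    rw [hCdef]
    refine ENNReal.add_lt_top.mpr ⟨ENNReal.add_lt_top.mpr ⟨hC₁t, ?_⟩, ENNReal.one_lt_top⟩
    exact ENNReal.mul_lt_top htwo_ne.lt_top hC₂t
  have hC0 : C ≠ 0 := by
    rw [hCdef]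
    simp
  refine ⟨C, hCt, ?_⟩
  set F := ∫⁻ x, f x ^ p * u x with hFdef
  have hstF : stNorm p u f = F ^ (1/p) := rfl
  rcases eq_or_ne F ⊤ with hFt | hFt
  · rw [hstF, hFt, ENNReal.top_rpow_of_pos (by positivity), ENNReal.mul_top hC0]
    exact le_top
  rcases eq_or_ne F 0 with hF0 | hF0
  · -- degenerate: F = 0
    have hwk0 : wkNorm q v g = 0 := by
      by_cases hfL : ∫⁻ x, f x = 0
      · have hfz : f =ᵐ[(volume : Measure (Fin n → ℝ))] 0 := (lintegral_eq_zero_iff hf).mp hfL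
        have hH := H (fun _ => 1) (fun _ => 1) measurable_const measurable_const (twoApC_one_one hp₀)
        have hint : ∫⁻ x, f x ^ p₀ * 1 = 0 := by
          rw [lintegral_eq_zero_iff (f := fun x => f x ^ p₀ * 1) ((hf.pow_const p₀).mul measurable_const)]
          filter_upwards [hfz] with x hx
          simp only [Pi.zero_apply] at hx
          simp [hx, ENNReal.zero_rpow_of_pos (show (0:ℝ) < p₀ by linarith)]
        have hst0 : stNorm p₀ (fun _ => (1:ℝ≥0∞)) f = 0 := by
          unfold stNorm
          rw [hint, ENNReal.zero_rpow_of_pos (by positivity)]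
        have hwk1 : wkNorm p₀ (fun _ => (1:ℝ≥0∞)) g = 0 :=
          le_antisymm (hst0 ▸ hH) (zero_le)
        refine le_antisymm (iSup_le fun z => ?_) (zero_le)
        by_cases hz0 : z = 0
        · simp [hz0]
        have hvol : volume {x | z < g x} = 0 := by
          have h7 := meas_zero_of_wkNorm_zero (show (0:ℝ) < p₀ by linarith) hwk1 hz0
          unfold wMeas at h7
          rwa [setLIntegral_one] at h7
        rw [wMeas_null hvol, ENNReal.zero_rpow_of_pos (by positivity), mul_zero]
      · have hMf_pos : ∀ x, 0 < maxOp f x := maxOp_pos hfL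
        have h1 : wkNorm q v (maxOp f) = 0 := by
          refine le_antisymm ?_ (zero_le)
          calc wkNorm q v (maxOp f) ≤ C₁ * stNorm p u f := hC₁ f hf
            _ = C₁ * 0 := by
                rw [hstF, hF0, ENNReal.zero_rpow_of_pos (by positivity)]
            _ = 0 := mul_zero _
        have hvv : ∫⁻ x, v x = 0 := by
          have hsets : ∀ j : ℕ, wMeas v {x | ((j:ℝ≥0∞))⁻¹ < maxOp f x} = 0 := fun j =>
            meas_zero_of_wkNorm_zero (show (0:ℝ) < q by linarith) h1
              (ENNReal.inv_ne_zero.mpr (ENNReal.natCast_ne_top j))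
          have hcover : (⋃ j : ℕ, {x | ((j:ℝ≥0∞))⁻¹ < maxOp f x}) = univ := by
            ext z
            simp only [mem_iUnion, mem_univ, iff_true, mem_setOf_eq]
            exact ENNReal.exists_inv_nat_lt (hMf_pos z).ne'
          have hle := lintegral_iUnion_le (μ := volume)
            (fun j : ℕ => {x | ((j:ℝ≥0∞))⁻¹ < maxOp f x}) v
          rw [hcover] at hle
          simp only [Measure.restrict_univ] at hle
          refine le_antisymm (le_trans hle ?_) (zero_le)
          have : ∀ j : ℕ, ∫⁻ x in {x | ((j:ℝ≥0∞))⁻¹ < maxOp f x}, v x = 0 := hsets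
          simp [this]
        exact wkNorm_eq_zero_of_lintegral (by positivity) hvv
    rw [hwk0]
    exact zero_le
  -- main branch
  unfold wkNorm
  refine iSup_le fun y => ?_
  by_cases hy0 : y = 0
  · simp [hy0]
  by_cases hyt : y = ⊤
  · have hempty : {x | y < g x} = ∅ := by
      rw [hyt]
      ext x
      simp only [mem_setOf_eq, mem_empty_iff_false, iff_false]
      exact not_top_lt
    rw [hempty, wMeas_null (by simp), ENNReal.zero_rpow_of_pos (by positivity), mul_zero]
    exact zero_le
  set E := {x | y < g x} with hEdef
  have hEm : MeasurableSet E := measurableSet_lt measurable_const hg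
  set S := {x | maxOp f x ≤ y} with hSdef
  have hSm : MeasurableSet S := measurableSet_le (measurable_maxOp f) measurable_const
  have hsplit : wMeas v E ≤ wMeas v {x | y < maxOp f x} + wMeas v (E ∩ S) := by
    have hsub : E ⊆ {x | y < maxOp f x} ∪ (E ∩ S) := by
      intro x hx
      by_cases hMf : maxOp f x ≤ y
      · exact Or.inr ⟨hx, hMf⟩
      · exact Or.inl (not_le.mp hMf)
    calc wMeas v E ≤ wMeas v ({x | y < maxOp f x} ∪ (E ∩ S)) :=
          lintegral_mono' (Measure.restrict_mono hsub le_rfl) le_rfl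
      _ ≤ _ := lintegral_union_le _ _ _
  have hterm1 : y * (wMeas v {x | y < maxOp f x}) ^ (1/q) ≤ C₁ * F ^ (1/p) := by
    calc y * (wMeas v {x | y < maxOp f x}) ^ (1/q)
        ≤ wkNorm q v (maxOp f) :=
          le_iSup (fun z => z * (wMeas v {x | z < maxOp f x}) ^ (1/q)) y
      _ ≤ C₁ * stNorm p u f := hC₁ f hf
      _ = C₁ * F ^ (1/p) := by rw [hstF]
  have hterm2 : y * (wMeas v (E ∩ S)) ^ (1/q) ≤ (2:ℝ≥0∞) ^ (p₀-1) * C₂ * F ^ (1/p) := by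
    set T : ℕ → Set (Fin n → ℝ) := fun k => (E ∩ S) ∩
      Icc (fun _ => -((k:ℝ)+1)) (fun i => (fun _ : Fin n => -((k:ℝ)+1)) i + 2*((k:ℝ)+1)) with hTdef
    set wk : ℕ → (Fin n → ℝ) → ℝ≥0∞ :=
      fun k => (T k).indicator (fun x => min (v x) ((k:ℝ≥0∞)+1)) with hwkdef
    have hcube : ∀ k : ℕ, IsCube (Icc (fun _ : Fin n => -((k:ℝ)+1))
        (fun i => (fun _ : Fin n => -((k:ℝ)+1)) i + 2*((k:ℝ)+1))) :=
      fun k => ⟨_, 2*((k:ℝ)+1), by positivity, rfl⟩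
    have hTm : ∀ k, MeasurableSet (T k) := fun k => (hEm.inter hSm).inter measurableSet_Icc
    have hwk_meas : ∀ k, Measurable (wk k) :=
      fun k => (hv.min measurable_const).indicator (hTm k)
    have hTmono : ∀ k l : ℕ, k ≤ l → T k ⊆ T l := by
      intro k l hkl x hx
      refine ⟨hx.1, fun i => ?_, fun i => ?_⟩ <;>
      · have h8 := hx.2.1 i
        have h9 := hx.2.2 i
        have hc : (k:ℝ) ≤ l := by exact_mod_cast hkl
        simp only at h8 h9 ⊢
        linarith
    have hmono : Monotone wk := by
      intro k l hkl
      intro x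
      by_cases hxk : x ∈ T k
      · rw [hwkdef]
        simp only
        rw [indicator_of_mem hxk, indicator_of_mem (hTmono k l hkl hxk)]
        refine min_le_min le_rfl (add_le_add ?_ le_rfl)
        exact_mod_cast hkl
      · rw [hwkdef]
        simp only
        rw [indicator_of_notMem hxk]
        exact zero_le
    have hpt : ∀ x, (⨆ k, wk k x) = (E ∩ S).indicator v x := by
      intro x
      by_cases hx : x ∈ E ∩ S
      · rw [indicator_of_mem hx]
        apply le_antisymm
        · refine iSup_le fun k => ?_
          by_cases hxk : x ∈ T k
          · rw [hwkdef]; simp only; rw [indicator_of_mem hxk]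
            exact min_le_left _ _
          · rw [hwkdef]; simp only; rw [indicator_of_notMem hxk]
            exact zero_le
        · obtain ⟨k₀, hk₀⟩ := exists_nat_ge (∑ i : Fin n, |x i|)
          have hxIcc : ∀ k, k₀ ≤ k → x ∈ T k := by
            intro k hk
            have hck : (k₀:ℝ) ≤ k := by exact_mod_cast hk
            refine ⟨hx, fun i => ?_, fun i => ?_⟩ <;>
            · have h1 : |x i| ≤ (k₀:ℝ) := by
                refine le_trans ?_ hk₀
                exact Finset.single_le_sum (f := fun i => |x i|)
                  (fun j _ => abs_nonneg _) (Finset.mem_univ i)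
              have h2 := abs_le.mp h1
              simp only
              linarith [h2.1, h2.2]
          have hbig : ∀ k, k₀ ≤ k → min (v x) ((k:ℝ≥0∞)+1) ≤ ⨆ j, wk j x := by
            intro k hk
            have h3 : wk k x = min (v x) ((k:ℝ≥0∞)+1) := by
              rw [hwkdef]; simp only; rw [indicator_of_mem (hxIcc k hk)]
            rw [← h3]
            exact le_iSup (fun j => wk j x) k
          rcases eq_or_ne (v x) ⊤ with hvt | hvt
          · rw [hvt]
            by_contra hcon
            push_neg at hcon
            obtain ⟨m, hm⟩ := ENNReal.exists_nat_gt hcon.ne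
            have h4 := hbig (max m k₀) (le_max_right _ _)
            rw [hvt, min_eq_right le_top] at h4
            have h5 : (m:ℝ≥0∞) ≤ ((max m k₀ : ℕ):ℝ≥0∞) + 1 := by
              refine le_trans ?_ le_self_add
              exact_mod_cast le_max_left m k₀
            exact absurd (lt_of_le_of_lt (le_trans h5 h4) hm) (lt_irrefl _)
          · obtain ⟨m, hm⟩ := ENNReal.exists_nat_gt hvt
            have h4 := hbig (max m k₀) (le_max_right _ _)
            have h5 : min (v x) (((max m k₀ : ℕ):ℝ≥0∞)+1) = v x := by
              refine min_eq_left ?_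
              refine le_trans hm.le (le_trans ?_ le_self_add)
              exact_mod_cast le_max_left m k₀
            rwa [h5] at h4
      · rw [indicator_of_notMem hx]
        refine le_antisymm (iSup_le fun k => ?_) (zero_le)
        have h6 : x ∉ T k := fun hxk => hx hxk.1
        rw [hwkdef]; simp only; rw [indicator_of_notMem h6]
    have hsup : (⨆ k, ∫⁻ x, wk k x) = wMeas v (E ∩ S) := by
      rw [← lintegral_iSup hwk_meas hmono]
      rw [lintegral_congr hpt, lintegral_indicator (hEm.inter hSm)]
      rfl
    have hk : ∀ k : ℕ, y * (∫⁻ x, wk k x) ^ (1/q) ≤ (2:ℝ≥0∞) ^ (p₀-1) * C₂ * F ^ (1/p) := by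
      intro k
      have hNt : ((k:ℝ≥0∞)+1) ≠ ⊤ := by
        simp [ENNReal.add_eq_top, ENNReal.natCast_ne_top]
      have hwN : ∀ x, wk k x ≤ (k:ℝ≥0∞)+1 := by
        intro x
        by_cases hxk : x ∈ T k
        · rw [hwkdef]; simp only; rw [indicator_of_mem hxk]
          exact min_le_right _ _
        · rw [hwkdef]; simp only; rw [indicator_of_notMem hxk]
          exact zero_le
      have hwv : ∀ x, wk k x ≤ v x := by
        intro x
        by_cases hxk : x ∈ T k
        · rw [hwkdef]; simp only; rw [indicator_of_mem hxk]
          exact min_le_left _ _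
        · rw [hwkdef]; simp only; rw [indicator_of_notMem hxk]
          exact zero_le
      have hWt : ∫⁻ x, wk k x ≠ ⊤ := by
        have hb : ∀ x, wk k x ≤ (Icc (fun _ : Fin n => -((k:ℝ)+1))
            (fun i => (fun _ : Fin n => -((k:ℝ)+1)) i + 2*((k:ℝ)+1))).indicator
            (fun _ => (k:ℝ≥0∞)+1) x := by
          intro x
          by_cases hxk : x ∈ T k
          · rw [hwkdef]; simp only
            rw [indicator_of_mem hxk, indicator_of_mem hxk.2]
            exact min_le_right _ _
          · rw [hwkdef]; simp only; rw [indicator_of_notMem hxk]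
            exact zero_le
        have h7 := lintegral_mono (μ := (volume : Measure (Fin n → ℝ))) hb
        rw [lintegral_indicator measurableSet_Icc, setLIntegral_const] at h7
        refine (lt_of_le_of_lt h7 ?_).ne
        exact ENNReal.mul_lt_top hNt.lt_top (isCube_volume (hcube k)).2.lt_top
      have hsupp : ∀ x, wk k x ≠ 0 → maxOp f x ≤ y := by
        intro x hxne
        by_cases hxk : x ∈ T k
        · exact hxk.1.2
        · exfalso; apply hxne; rw [hwkdef]; simp only
          rw [indicator_of_notMem hxk]
      have hsuppE : ∀ x, wk k x ≠ 0 → y < g x := by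
        intro x hxne
        by_cases hxk : x ∈ T k
        · exact hxk.1.1
        · exfalso; apply hxne; rw [hwkdef]; simp only
          rw [indicator_of_notMem hxk]
      exact claimB hp₀ hp hq hf hg hu hv H hC₂ hFdef hF0 hFt hy0 hyt
        (by simp : ((k:ℝ≥0∞)+1) ≠ 0) hNt (hwk_meas k) hwN hWt hwv hsupp hsuppE
    calc y * (wMeas v (E ∩ S)) ^ (1/q)
        = y * (⨆ k, ∫⁻ x, wk k x) ^ (1/q) := by rw [hsup]
      _ = y * ⨆ k, (∫⁻ x, wk k x) ^ (1/q) := by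
          rw [iSup_rpow (by positivity) (fun k => ∫⁻ x, wk k x)]
      _ = ⨆ k, y * (∫⁻ x, wk k x) ^ (1/q) := by rw [ENNReal.mul_iSup]
      _ ≤ _ := iSup_le hk
  have h1q1 : (1:ℝ)/q ≤ 1 := by
    rw [div_le_one (by linarith)]
    linarith
  calc y * (wMeas v E) ^ (1/q)
      ≤ y * ((wMeas v {x | y < maxOp f x} + wMeas v (E ∩ S)) ^ (1/q)) :=
        mul_le_mul_right (ENNReal.rpow_le_rpow hsplit (by positivity)) _
    _ ≤ y * ((wMeas v {x | y < maxOp f x}) ^ (1/q) + (wMeas v (E ∩ S)) ^ (1/q)) :=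
        mul_le_mul_right (ENNReal.rpow_add_le_add_rpow _ _ (by positivity) h1q1) _
    _ = y * (wMeas v {x | y < maxOp f x}) ^ (1/q) + y * (wMeas v (E ∩ S)) ^ (1/q) :=
        mul_add _ _ _
    _ ≤ C₁ * F ^ (1/p) + (2:ℝ≥0∞) ^ (p₀-1) * C₂ * F ^ (1/p) := add_le_add hterm1 hterm2
    _ = (C₁ + (2:ℝ≥0∞) ^ (p₀-1) * C₂) * F ^ (1/p) := (add_mul _ _ _).symm
    _ ≤ C * stNorm p u f := by
        rw [hstF, hCdef]
        exact mul_le_mul_left le_self_add _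


end StmtAux

theorem stmt9 {n : ℕ} (p₀ : ℝ) (hp₀ : 1 ≤ p₀)
    (f g : (Fin n → ℝ) → ℝ≥0∞) (hf : Measurable f) (hg : Measurable g)
    (H : ∀ u₁ u₂ : (Fin n → ℝ) → ℝ≥0∞, Measurable u₁ → Measurable u₂ →
      twoApC p₀ u₁ u₂ = 1 → wkNorm p₀ u₂ g ≤ stNorm p₀ u₁ f)
    (p q : ℝ) (hp : 1 < p) (hq : 1 < q)
    (u v : (Fin n → ℝ) → ℝ≥0∞) (hu : Measurable u) (hv : Measurable v)
    -- (u,v) ∈ A_{p,q} : M : L^p(u) → L^{q,∞}(v)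
    (hApq : ∃ C : ℝ≥0∞, C < ⊤ ∧ ∀ h : (Fin n → ℝ) → ℝ≥0∞, Measurable h →
      wkNorm q v (maxOp h) ≤ C * stNorm p u h)
    -- (v^{1-q'}, u^{1-p'}) ∈ S_{q',p'} : M : L^{q'}(v^{1-q'}) → L^{p'}(u^{1-p'})
    (hS : ∃ C : ℝ≥0∞, C < ⊤ ∧ ∀ h : (Fin n → ℝ) → ℝ≥0∞, Measurable h →
      stNorm (p / (p - 1)) (fun x => u x ^ (1 - p / (p - 1))) (maxOp h)
        ≤ C * stNorm (q / (q - 1)) (fun x => v x ^ (1 - q / (q - 1))) h) :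
    ∃ C : ℝ≥0∞, C < ⊤ ∧ wkNorm q v g ≤ C * stNorm p u f := by
  exact StmtAux.main hp₀ f g hf hg H p q hp hq u v hu hv hApq hS


end
end
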